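/- arXiv:2111.01128 — 17 statements merged into one kernel-verified Lean document; each statement's English description precedes it below -/
import Mathlib

section
/- For $a, b > 0$ with $a \ne b$ and $v \in [0,1]$, with $\mu := \min\{1-v,v\}$, the Heinz mean satisfies $\sqrt{ab} \le Hz_v(a,b) \le \left(1 + \frac{\mu^2}{2}(\log a - \log b)^2\right) Hz_v(a,b) \le \frac{a+b}{2}$. -/
open Real

/-- `cosh y ≥ 1 + y²/2`. -/
lemma cosh_ge_one_add_sq (y : ℝ) : 1 + y ^ 2 / 2 ≤ Real.cosh y := by
  have h1 : Real.cosh y = 1 + 2 * Real.sinh (|y| / 2) ^ 2 := by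
    rw [← Real.cosh_abs, show |y| = 2 * (|y| / 2) by ring, Real.cosh_two_mul,
      Real.cosh_sq]
    ring
  have h2 : |y| / 2 ≤ Real.sinh (|y| / 2) :=
    Real.self_le_sinh_iff.2 (by positivity)
  have h3 : (|y| / 2) ^ 2 ≤ Real.sinh (|y| / 2) ^ 2 := by
    have := abs_nonneg y
    nlinarith
  have h4 : (|y| / 2) ^ 2 = y ^ 2 / 4 := by
    rw [div_pow, sq_abs]; ring
  nlinarith

lemma key (c μ u : ℝ) (hc : 0 ≤ c) (hμ : 0 ≤ μ) :
    (1 + μ ^ 2 * u ^ 2 / 2) * Real.cosh (c * u) ≤ Real.cosh ((c + μ) * u) := by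
  have hadd : Real.cosh ((c + μ) * u) =
      Real.cosh (c * u) * Real.cosh (μ * u) + Real.sinh (c * u) * Real.sinh (μ * u) := by
    rw [show (c + μ) * u = c * u + μ * u by ring, Real.cosh_add]
  have hs : 0 ≤ Real.sinh (c * u) * Real.sinh (μ * u) := by
    rcases le_total 0 u with h | h
    · exact mul_nonneg (Real.sinh_nonneg_iff.2 (mul_nonneg hc h))
        (Real.sinh_nonneg_iff.2 (mul_nonneg hμ h))
    · have s1 : Real.sinh (c * u) ≤ 0 := Real.sinh_nonpos_iff.2 (mul_nonpos_of_nonneg_of_nonpos hc h)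
      have s2 : Real.sinh (μ * u) ≤ 0 := Real.sinh_nonpos_iff.2 (mul_nonpos_of_nonneg_of_nonpos hμ h)
      nlinarith
  have hc1 : 1 + (μ * u) ^ 2 / 2 ≤ Real.cosh (μ * u) := cosh_ge_one_add_sq _
  have hpos : (0:ℝ) < Real.cosh (c * u) := Real.cosh_pos _
  nlinarith [hpos.le]

theorem stmt2 (a b v : ℝ) (ha : 0 < a) (hb : 0 < b) (hab : a ≠ b)
    (hv0 : 0 ≤ v) (hv1 : v ≤ 1) :
    Real.sqrt (a * b) ≤ (a ^ (1 - v) * b ^ v + a ^ v * b ^ (1 - v)) / 2 ∧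
    (a ^ (1 - v) * b ^ v + a ^ v * b ^ (1 - v)) / 2 ≤
      (1 + (min (1 - v) v) ^ 2 / 2 * (Real.log a - Real.log b) ^ 2) *
        ((a ^ (1 - v) * b ^ v + a ^ v * b ^ (1 - v)) / 2) ∧
    (1 + (min (1 - v) v) ^ 2 / 2 * (Real.log a - Real.log b) ^ 2) *
        ((a ^ (1 - v) * b ^ v + a ^ v * b ^ (1 - v)) / 2) ≤ (a + b) / 2 := by
  have la := Real.log a
  set L := Real.log a with hL
  set M := Real.log b with hM
  have hea : Real.exp L = a := Real.exp_log ha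
  have heb : Real.exp M = b := Real.exp_log hb
  have h1 : a ^ (1 - v) * b ^ v = Real.exp ((1 - v) * L + v * M) := by
    rw [Real.rpow_def_of_pos ha, Real.rpow_def_of_pos hb, ← Real.exp_add, ← hL, ← hM]; ring_nf
  have h2 : a ^ v * b ^ (1 - v) = Real.exp (v * L + (1 - v) * M) := by
    rw [Real.rpow_def_of_pos ha, Real.rpow_def_of_pos hb, ← Real.exp_add, ← hL, ← hM]; ring_nf
  have e1 : Real.exp ((1 - v) * L + v * M)
      = Real.exp ((L + M) / 2) * Real.exp ((1 / 2 - v) * (L - M)) := by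
    rw [← Real.exp_add]; congr 1; ring
  have e2 : Real.exp (v * L + (1 - v) * M)
      = Real.exp ((L + M) / 2) * Real.exp (-((1 / 2 - v) * (L - M))) := by
    rw [← Real.exp_add]; congr 1; ring
  have hH : (a ^ (1 - v) * b ^ v + a ^ v * b ^ (1 - v)) / 2
      = Real.exp ((L + M) / 2) * Real.cosh ((1 / 2 - v) * (L - M)) := by
    rw [h1, h2, e1, e2, Real.cosh_eq]; ring
  have hAM : (a + b) / 2 = Real.exp ((L + M) / 2) * Real.cosh ((L - M) / 2) := by
    rw [← hea, ← heb, Real.cosh_eq]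
    rw [show Real.exp L = Real.exp ((L + M) / 2) * Real.exp ((L - M) / 2) by
      rw [← Real.exp_add]; congr 1; ring,
      show Real.exp M = Real.exp ((L + M) / 2) * Real.exp (-((L - M) / 2)) by
      rw [← Real.exp_add]; congr 1; ring]
    ring
  have hGM : Real.sqrt (a * b) = Real.exp ((L + M) / 2) := by
    rw [show a * b = Real.exp ((L + M) / 2) ^ 2 by
      rw [sq, ← Real.exp_add, show (L + M) / 2 + (L + M) / 2 = L + M by ring,
        Real.exp_add, hea, heb],
      Real.sqrt_sq (Real.exp_pos _).le]
  have hexp : (0:ℝ) < Real.exp ((L + M) / 2) := Real.exp_pos _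
  have hcoshp : (0:ℝ) < Real.cosh ((1 / 2 - v) * (L - M)) := Real.cosh_pos _
  refine ⟨?_, ?_, ?_⟩
  · rw [hGM, hH]
    nlinarith [Real.one_le_cosh ((1 / 2 - v) * (L - M))]
  · have hfac : (1:ℝ) ≤ 1 + (min (1 - v) v) ^ 2 / 2 * (L - M) ^ 2 := by nlinarith [sq_nonneg (min (1 - v) v), sq_nonneg (L - M), mul_nonneg (sq_nonneg (min (1 - v) v)) (sq_nonneg (L - M))]
    have hHnn : 0 ≤ (a ^ (1 - v) * b ^ v + a ^ v * b ^ (1 - v)) / 2 := by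
      rw [hH]; positivity
    nlinarith
  · rw [hH, hAM]
    set c := |1 / 2 - v| with hc
    set m := min (1 - v) v with hm
    have hcm : c + m = 1 / 2 := by
      rcases le_total v (1/2) with h | h
      · rw [hc, hm, abs_of_nonneg (by linarith), min_eq_right (by linarith)]; ring
      · rw [hc, hm, abs_of_nonpos (by linarith), min_eq_left (by linarith)]; ring
    have hmnn : 0 ≤ m := le_min (by linarith) hv0
    have hc0 : 0 ≤ c := abs_nonneg _
    have hcosh1 : Real.cosh ((1 / 2 - v) * (L - M)) = Real.cosh (c * |L - M|) := by
      rw [← Real.cosh_abs, abs_mul, hc]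
    have hcosh2 : Real.cosh ((L - M) / 2) = Real.cosh ((c + m) * |L - M|) := by
      rw [hcm, ← Real.cosh_abs ((L - M)/2), show |(L - M)/2| = 1/2 * |L - M| by
        rw [abs_div]; simp [abs_of_nonneg]; ring]
    rw [hcosh1, hcosh2]
    have hkey := key c m (|L - M|) hc0 hmnn
    have hsq : |L - M| ^ 2 = (L - M) ^ 2 := sq_abs _
    calc (1 + m ^ 2 / 2 * (L - M) ^ 2) * (Real.exp ((L + M) / 2) * Real.cosh (c * |L - M|))
        = Real.exp ((L + M) / 2) * ((1 + m ^ 2 * |L - M| ^ 2 / 2) * Real.cosh (c * |L - M|)) := by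
          rw [hsq]; ring
      _ ≤ Real.exp ((L + M) / 2) * Real.cosh ((c + m) * |L - M|) := by
          exact mul_le_mul_of_nonneg_left hkey hexp.le
end

section
/- For $a, b > 0$ with $a \ne b$ and $v \in [0,1]$, one has $\frac{a-b}{\log a - \log b} \le \frac{1}{2}\left((1-v)a + vb\right) + \frac{1}{2} a^v b^{1-v}$. -/
open Real

lemma trap (w : ℝ) (hw : 0 ≤ w) : 2 * (Real.exp w - 1) ≤ w * (1 + Real.exp w) := by
  have hmono : MonotoneOn (fun u : ℝ => u * (1 + Real.exp u) - 2 * (Real.exp u - 1)) (Set.Ici 0) := by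
    apply monotoneOn_of_deriv_nonneg (convex_Ici 0)
    · fun_prop
    · fun_prop
    · intro x hx
      have hd : deriv (fun u : ℝ => u * (1 + Real.exp u) - 2 * (Real.exp u - 1)) x
          = 1 - (1 - x) * Real.exp x := by
        have : HasDerivAt (fun u : ℝ => u * (1 + Real.exp u) - 2 * (Real.exp u - 1))
            (1 * (1 + Real.exp x) + x * Real.exp x - 2 * Real.exp x) x := by
          have h1 : HasDerivAt (fun u : ℝ => u * (1 + Real.exp u))
              (1 * (1 + Real.exp x) + x * Real.exp x) x := by
            exact (hasDerivAt_id x).mul ((Real.hasDerivAt_exp x).const_add 1)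
          have h2 : HasDerivAt (fun u : ℝ => 2 * (Real.exp u - 1)) (2 * Real.exp x) x := by
            exact ((Real.hasDerivAt_exp x).sub_const 1).const_mul 2
          exact h1.sub h2
        rw [this.deriv]; ring
      rw [hd]
      have h3 : 1 - x ≤ Real.exp (-x) := by linarith [Real.add_one_le_exp (-x)]
      have h4 : (1 - x) * Real.exp x ≤ Real.exp (-x) * Real.exp x :=
        mul_le_mul_of_nonneg_right h3 (Real.exp_pos x).le
      rw [← Real.exp_add] at h4
      simp at h4
      linarith
  have h0 := hmono (Set.self_mem_Ici) (Set.mem_Ici.2 hw) hw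
  simp at h0
  linarith

lemma core (b c v : ℝ) (hb : 0 < b) (hc : 0 < c) (hv0 : 0 ≤ v) (hv1 : v ≤ 1) :
    (b * Real.exp c - b) / c ≤
      ((1 - v) * (b * Real.exp c) + v * b) / 2 + (b * Real.exp c) ^ v * b ^ (1 - v) / 2 := by
  have hrw : (b * Real.exp c) ^ v * b ^ (1 - v) = b * Real.exp (c * v) := by
    rw [Real.mul_rpow hb.le (Real.exp_pos c).le,
      Real.rpow_def_of_pos (Real.exp_pos c), Real.log_exp, mul_right_comm, ← Real.rpow_add hb]
    simp
  rw [hrw]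
  -- key scalar inequality
  have t1 := trap (v * c) (by positivity)
  have t2 := trap ((1 - v) * c) (mul_nonneg (by linarith) hc.le)
  have hE : Real.exp c = Real.exp (v * c) * Real.exp ((1 - v) * c) := by
    rw [← Real.exp_add]; ring_nf
  have hx := (Real.exp_pos (v * c)).le
  have hy := (Real.exp_pos ((1 - v) * c)).le
  rw [div_le_iff₀ hc, hE, mul_comm c v]
  nlinarith [mul_le_mul_of_nonneg_left t1 hb.le,
    mul_le_mul_of_nonneg_left (mul_le_mul_of_nonneg_left t2 hx) hb.le,
    mul_pos hb (Real.exp_pos (v*c))]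

theorem stmt3 (a b v : ℝ) (ha : 0 < a) (hb : 0 < b) (hab : a ≠ b)
    (hv0 : 0 ≤ v) (hv1 : v ≤ 1) :
    (a - b) / (Real.log a - Real.log b) ≤ ((1 - v) * a + v * b) / 2 + a ^ v * b ^ (1 - v) / 2 := by
  have key : ∀ a b v : ℝ, 0 < b → b < a → 0 ≤ v → v ≤ 1 →
      (a - b) / (Real.log a - Real.log b) ≤
        ((1 - v) * a + v * b) / 2 + a ^ v * b ^ (1 - v) / 2 := by
    intro a b v hb hba hv0 hv1
    have ha : 0 < a := hb.trans hba
    set c := Real.log a - Real.log b with hcdef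
    have hc : 0 < c := sub_pos.2 (Real.log_lt_log hb hba)
    have hae : a = b * Real.exp c := by
      rw [hcdef, Real.exp_sub, Real.exp_log ha, Real.exp_log hb]
      field_simp
    have h := core b c v hb hc hv0 hv1
    rw [← hae] at h
    exact h
  rcases hab.lt_or_gt with h | h
  · have h2 := key b a (1 - v) ha h (by linarith) (by linarith)
    have h1 : (1:ℝ) - (1 - v) = v := by ring
    rw [h1] at h2
    have hL : (a - b) / (Real.log a - Real.log b) = (b - a) / (Real.log b - Real.log a) := by
      rw [← neg_div_neg_eq]; ring_nf
    rw [hL, mul_comm (a ^ v)]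
    linarith
  · exact key a b v hb h hv0 hv1
end

section
/- For $a, b > 0$ with $a \ne b$ and $v \in [0,1]$, one has $\frac{a-b}{\log a - \log b} \le \frac{1}{2} \cdot \frac{a+b}{2} + \frac{1}{2} \cdot \frac{a^{1-v}b^v + a^v b^{1-v}}{2}$. -/
lemma log_key (x : ℝ) (hx : 1 ≤ x) : 2*(x-1)/(x+1) ≤ Real.log x := by
  have hx0 : 0 < x := lt_of_lt_of_le one_pos hx
  have hmono : MonotoneOn (fun y : ℝ => (y+1) * Real.log y - 2*(y-1)) (Set.Ici 1) := by
    apply monotoneOn_of_deriv_nonneg (convex_Ici 1)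
    · apply ContinuousOn.sub
      · exact (continuousOn_id.add continuousOn_const).mul
          (Real.continuousOn_log.mono (by intro y hy; simp at hy ⊢; linarith))
      · fun_prop
    · intro y hy
      rw [interior_Ici] at hy
      have hy0 : 0 < y := lt_trans one_pos hy
      have hd : HasDerivAt (fun y : ℝ => (y+1) * Real.log y - 2*(y-1))
          (Real.log y + (y+1)/y - 2) y := by
        have h1 := Real.hasDerivAt_log (ne_of_gt hy0)
        have h2 : HasDerivAt (fun y : ℝ => y + 1) 1 y := (hasDerivAt_id y).add_const 1
        have h3 : HasDerivAt (fun y : ℝ => 2*(y-1)) 2 y := by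
          have := ((hasDerivAt_id y).sub_const 1).const_mul (2:ℝ)
          simpa using this
        have := (h2.mul h1).sub h3
        exact this.congr_deriv (by ring)
      exact hd.differentiableAt.differentiableWithinAt
    · intro y hy
      rw [interior_Ici] at hy
      have hy0 : 0 < y := lt_trans one_pos hy
      have hd : HasDerivAt (fun y : ℝ => (y+1) * Real.log y - 2*(y-1))
          (Real.log y + (y+1)/y - 2) y := by
        have h1 := Real.hasDerivAt_log (ne_of_gt hy0)
        have h2 : HasDerivAt (fun y : ℝ => y + 1) 1 y := (hasDerivAt_id y).add_const 1
        have h3 : HasDerivAt (fun y : ℝ => 2*(y-1)) 2 y := by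
          have := ((hasDerivAt_id y).sub_const 1).const_mul (2:ℝ)
          simpa using this
        have := (h2.mul h1).sub h3
        exact this.congr_deriv (by ring)
      rw [hd.deriv]
      have hlog : 1 - 1/y ≤ Real.log y := by
        have := Real.log_le_sub_one_of_pos (show (0:ℝ) < 1/y by positivity)
        rw [Real.log_div one_ne_zero (ne_of_gt hy0), Real.log_one] at this
        linarith
      have : (y+1)/y = 1 + 1/y := by field_simp
      rw [this]
      linarith
  have h := hmono (Set.mem_Ici.mpr le_rfl) (Set.mem_Ici.mpr hx) hx
  simp [Real.log_one] at h
  rw [div_le_iff₀ (by linarith : (0:ℝ) < x + 1)]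
  nlinarith [h]

set_option maxHeartbeats 1000000 in
lemma main' (a b v : ℝ) (hb : 0 < b) (hba : b < a) (hv0 : 0 ≤ v) (hv1 : v ≤ 1) :
    (a - b) / (Real.log a - Real.log b) ≤
      (1 / 2) * ((a + b) / 2) + (1 / 2) * ((a ^ (1 - v) * b ^ v + a ^ v * b ^ (1 - v)) / 2) := by
  have ha : 0 < a := lt_trans hb hba
  set sa := Real.sqrt a with hsa
  set sb := Real.sqrt b with hsb
  have hsa0 : 0 < sa := Real.sqrt_pos.mpr ha
  have hsb0 : 0 < sb := Real.sqrt_pos.mpr hb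
  have hsba : sb < sa := Real.sqrt_lt_sqrt hb.le hba
  have hsa2 : sa ^ 2 = a := Real.sq_sqrt ha.le
  have hsb2 : sb ^ 2 = b := Real.sq_sqrt hb.le
  -- key inequality applied to x = sa/sb
  have hx1 : 1 ≤ sa / sb := (one_le_div hsb0).mpr hsba.le
  have hkey := log_key (sa/sb) hx1
  have hlogq : Real.log (sa/sb) = (Real.log a - Real.log b) / 2 := by
    rw [Real.log_div (ne_of_gt hsa0) (ne_of_gt hsb0), hsa, hsb,
      Real.log_sqrt ha.le, Real.log_sqrt hb.le]
    ring
  have hk2 : 4 * (sa - sb) / (sa + sb) ≤ Real.log a - Real.log b := by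
    have h1 : 2*(sa/sb - 1)/(sa/sb + 1) = 2*(sa - sb)/(sa + sb) := by
      field_simp
    rw [h1, hlogq] at hkey
    rw [div_le_iff₀ (by positivity)] at hkey ⊢
    linarith
  have hden : 0 < Real.log a - Real.log b := by
    have : 0 < 4 * (sa - sb) / (sa + sb) :=
      div_pos (by linarith) (by linarith)
    linarith [lt_of_lt_of_le this hk2]
  have hsub : 0 < sa - sb := sub_pos.mpr hsba
  have hL : (a - b) / (Real.log a - Real.log b) ≤ (sa + sb)^2 / 4 := by
    have hnum : a - b = (sa - sb) * (sa + sb) := by nlinarith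
    rw [hnum]
    have hd0 : 0 < 4 * (sa - sb) / (sa + sb) := div_pos (by linarith) (by linarith)
    calc (sa - sb) * (sa + sb) / (Real.log a - Real.log b)
        ≤ (sa - sb) * (sa + sb) / (4 * (sa - sb) / (sa + sb)) := by
          gcongr
      _ = (sa + sb)^2 / 4 := by
          rw [div_div_eq_mul_div]
          field_simp
  -- AM-GM: sqrt(ab) ≤ Heinz/2
  set p := a ^ (1 - v) * b ^ v with hp
  set q := a ^ v * b ^ (1 - v) with hq
  have hp0 : 0 < p := by positivity
  have hq0 : 0 < q := by positivity
  have hpq : p * q = a * b := by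
    rw [hp, hq]
    rw [show a ^ (1-v) * b ^ v * (a ^ v * b ^ (1-v)) =
        (a ^ (1-v) * a ^ v) * (b ^ v * b ^ (1-v)) by ring,
      ← Real.rpow_add ha, ← Real.rpow_add hb]
    norm_num
  have hG : 2 * (sa * sb) ≤ p + q := by
    have h1 : sa * sb = Real.sqrt p * Real.sqrt q := by
      rw [hsa, hsb, ← Real.sqrt_mul ha.le, ← Real.sqrt_mul hp0.le, hpq]
    rw [h1]
    nlinarith [sq_nonneg (Real.sqrt p - Real.sqrt q), Real.sq_sqrt hp0.le,
      Real.sq_sqrt hq0.le]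
  have hexp : (sa + sb)^2 = a + b + 2 * (sa * sb) := by nlinarith
  calc (a - b) / (Real.log a - Real.log b) ≤ (sa + sb)^2 / 4 := hL
    _ = (a + b) / 4 + 2 * (sa * sb) / 4 := by rw [hexp]; ring
    _ ≤ (a + b) / 4 + (p + q) / 4 := by linarith
    _ = (1 / 2) * ((a + b) / 2) + (1 / 2) * ((p + q) / 2) := by ring

theorem stmt4 (a b v : ℝ) (ha : 0 < a) (hb : 0 < b) (hab : a ≠ b)
    (hv0 : 0 ≤ v) (hv1 : v ≤ 1) :
    (a - b) / (Real.log a - Real.log b) ≤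
      (1 / 2) * ((a + b) / 2) + (1 / 2) * ((a ^ (1 - v) * b ^ v + a ^ v * b ^ (1 - v)) / 2) := by
  rcases lt_or_gt_of_ne hab with h | h
  · have := main' b a v ha h hv0 hv1
    have e1 : (b - a) / (Real.log b - Real.log a) = (a - b) / (Real.log a - Real.log b) := by
      rw [show b - a = -(a - b) by ring, show Real.log b - Real.log a = -(Real.log a - Real.log b) by ring,
        neg_div_neg_eq]
    rw [e1] at this
    calc (a - b) / (Real.log a - Real.log b)
        ≤ (1/2) * ((b + a)/2) + (1/2) * ((b ^ (1-v) * a ^ v + b ^ v * a ^ (1-v))/2) := this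
      _ = (1/2) * ((a + b)/2) + (1/2) * ((a ^ (1-v) * b ^ v + a ^ v * b ^ (1-v))/2) := by ring
  · exact main' a b v hb h hv0 hv1
end

section
/- For $t > 0$ with $t \ne 1$, one has $\frac{t-1}{\log t} \le \frac{t^{t/(t-1)}}{e} \le \frac{t^2+1}{t+1}$. -/
open MeasureTheory Set Real

lemma set_avg_eq' (a b : ℝ) (hab : a < b) (f : ℝ → ℝ) :
    ⨍ x in Icc a b, f x = (b - a)⁻¹ * ∫ x in a..b, f x := by
  rw [setAverage_eq, integral_Icc_eq_integral_Ioc, ← intervalIntegral.integral_of_le hab.le,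
    Real.volume_real_Icc_of_le hab.le, smul_eq_mul]

lemma key_ineq (a b : ℝ) (ha : 0 < a) (hab : a < b) :
    (b - a) / (Real.log b - Real.log a) ≤
      Real.exp ((b * Real.log b - a * Real.log a - b + a) / (b - a)) ∧
    (b * Real.log b - a * Real.log a - b + a) / (b - a) ≤ Real.log ((a + b) / 2) := by
  have hb : 0 < b := ha.trans hab
  have hba : 0 < b - a := by linarith
  have hlog : Real.log a < Real.log b := Real.log_lt_log ha hab
  have hsub : Icc a b ⊆ Ioi (0:ℝ) := fun x hx => lt_of_lt_of_le ha hx.1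
  have hne : ∀ x ∈ Icc a b, x ≠ 0 := fun x hx => ne_of_gt (hsub hx)
  -- measure facts
  have h0 : volume (Icc a b) ≠ 0 := by
    rw [Real.volume_Icc]
    simpa using by linarith
  have hT : volume (Icc a b) ≠ ⊤ := measure_Icc_lt_top.ne
  -- continuity / integrability
  have hclog : ContinuousOn Real.log (Icc a b) :=
    Real.continuousOn_log.mono (fun x hx => by simpa using hne x hx)
  have hilog : IntegrableOn Real.log (Icc a b) := hclog.integrableOn_Icc
  have hcinv : ContinuousOn (fun x : ℝ => x⁻¹) (Icc a b) :=
    continuousOn_id.inv₀ hne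
  have hiinv : IntegrableOn (fun x : ℝ => x⁻¹) (Icc a b) := hcinv.integrableOn_Icc
  have hiid : IntegrableOn (fun x : ℝ => x) (Icc a b) := continuousOn_id.integrableOn_Icc
  -- average computations
  have A2 : ⨍ x in Icc a b, Real.log x = (b * Real.log b - a * Real.log a - b + a) / (b - a) := by
    rw [set_avg_eq' a b hab, integral_log]
    rw [inv_mul_eq_div]
  have A1 : ⨍ x in Icc a b, x = (a + b) / 2 := by
    rw [set_avg_eq' a b hab, integral_id]
    field_simp
    ring
  have A3 : ⨍ x in Icc a b, x⁻¹ = (Real.log b - Real.log a) / (b - a) := by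
    rw [set_avg_eq' a b hab, integral_inv (by
      intro h
      exact absurd rfl (hne 0 (by rwa [uIcc_of_le hab.le] at h)))]
    rw [Real.log_div hb.ne' ha.ne', inv_mul_eq_div]
  constructor
  · -- lower bound via Jensen for convex -log with f = inv
    have hsub2 : Icc b⁻¹ a⁻¹ ⊆ Ioi (0:ℝ) := fun x hx => lt_of_lt_of_le (by positivity) hx.1
    have hconv : ConvexOn ℝ (Icc b⁻¹ a⁻¹) (fun y => -Real.log y) :=
      (strictConcaveOn_log_Ioi.concaveOn.subset hsub2 (convex_Icc _ _)).neg
    have hgc : ContinuousOn (fun y => -Real.log y) (Icc b⁻¹ a⁻¹) :=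
      (Real.continuousOn_log.mono (fun x hx => by
        simpa using ne_of_gt (hsub2 hx))).neg
    have hfs : ∀ᵐ x ∂volume.restrict (Icc a b), x⁻¹ ∈ Icc b⁻¹ a⁻¹ := by
      filter_upwards [ae_restrict_mem measurableSet_Icc] with x hx
      constructor
      · exact inv_anti₀ (hsub hx) hx.2
      · exact inv_anti₀ ha hx.1
    have hgi : IntegrableOn ((fun y => -Real.log y) ∘ fun x : ℝ => x⁻¹) (Icc a b) := by
      have : ((fun y => -Real.log y) ∘ fun x : ℝ => x⁻¹) = Real.log := by
        funext x; simp [Real.log_inv]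
      rw [this]; exact hilog
    have := hconv.map_set_average_le hgc isClosed_Icc h0 hT hfs hiinv hgi
    rw [A3] at this
    simp only [Real.log_inv, neg_neg] at this
    rw [A2] at this
    have hu : 0 < (Real.log b - Real.log a) / (b - a) := div_pos (by linarith) hba
    have := Real.exp_le_exp.mpr this
    rw [Real.exp_neg, Real.exp_log hu] at this
    calc (b - a) / (Real.log b - Real.log a)
        = ((Real.log b - Real.log a) / (b - a))⁻¹ := by rw [inv_div]
      _ ≤ _ := this
  · -- upper bound via Jensen for concave log with f = id
    have hconc : ConcaveOn ℝ (Icc a b) Real.log :=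
      strictConcaveOn_log_Ioi.concaveOn.subset hsub (convex_Icc _ _)
    have hfs : ∀ᵐ x ∂volume.restrict (Icc a b), x ∈ Icc a b :=
      ae_restrict_mem measurableSet_Icc
    have hgi : IntegrableOn (Real.log ∘ fun x : ℝ => x) (Icc a b) := hilog
    have := hconc.le_map_set_average hclog isClosed_Icc h0 hT hfs hiid hgi
    rw [A1] at this
    calc (b * Real.log b - a * Real.log a - b + a) / (b - a)
        = ⨍ x in Icc a b, (Real.log ∘ fun x : ℝ => x) x := by rw [← A2]; rfl
      _ ≤ _ := this

theorem stmt5 (t : ℝ) (ht : 0 < t) (ht1 : t ≠ 1) :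
    (t - 1) / Real.log t ≤ t ^ (t / (t - 1)) / Real.exp 1 ∧
    t ^ (t / (t - 1)) / Real.exp 1 ≤ (t ^ 2 + 1) / (t + 1) := by
  have ht1' : t - 1 ≠ 0 := sub_ne_zero.mpr ht1
  have hE : t ^ (t / (t - 1)) / Real.exp 1
      = Real.exp ((t * Real.log t - t + 1) / (t - 1)) := by
    rw [Real.rpow_def_of_pos ht, ← Real.exp_sub]
    congr 1
    field_simp
    ring
  have half : (t + 1) / 2 ≤ (t ^ 2 + 1) / (t + 1) := by
    rw [div_le_div_iff₀ (by norm_num) (by linarith)]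
    nlinarith [sq_nonneg (t - 1)]
  rw [hE]
  rcases lt_or_gt_of_ne ht1 with h | h
  · -- t < 1 : apply key_ineq t 1
    obtain ⟨k1, k2⟩ := key_ineq t 1 ht h
    simp only [Real.log_one] at k1 k2
    have e1 : (1 * Real.log 1 - t * Real.log t - 1 + t) / (1 - t)
        = (t * Real.log t - t + 1) / (t - 1) := by
      rw [show (1 * Real.log 1 - t * Real.log t - 1 + t) = -(t * Real.log t - t + 1) by
        simp; ring, show (1 - t) = -(t - 1) by ring, neg_div_neg_eq]
    have e2 : (1 - t) / (0 - Real.log t) = (t - 1) / Real.log t := by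
      rw [zero_sub, div_neg, ← neg_div]; ring_nf
    constructor
    · calc (t - 1) / Real.log t = (1 - t) / (0 - Real.log t) := e2.symm
        _ ≤ Real.exp ((1 * Real.log 1 - t * Real.log t - 1 + t) / (1 - t)) := by
            simpa using k1
        _ = _ := by rw [e1]
    · have : (t * Real.log t - t + 1) / (t - 1) ≤ Real.log ((t + 1) / 2) := by
        rw [← e1]; simpa using k2
      calc Real.exp ((t * Real.log t - t + 1) / (t - 1))
          ≤ (t + 1) / 2 := by
            rw [← Real.exp_log (show (0:ℝ) < (t + 1)/2 by linarith)]
            exact Real.exp_le_exp.mpr this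
        _ ≤ _ := half
  · -- 1 < t : apply key_ineq 1 t
    obtain ⟨k1, k2⟩ := key_ineq 1 t one_pos h
    simp only [Real.log_one] at k1 k2
    have e1 : (t * Real.log t - 1 * Real.log 1 - t + 1) = t * Real.log t - t + 1 := by simp
    constructor
    · calc (t - 1) / Real.log t = (t - 1) / (Real.log t - 0) := by rw [sub_zero]
        _ ≤ _ := by simpa [e1] using k1
    · have hk2 : (t * Real.log t - t + 1) / (t - 1) ≤ Real.log ((1 + t) / 2) := by
        simpa [e1] using k2
      calc Real.exp ((t * Real.log t - t + 1) / (t - 1))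
          ≤ (1 + t) / 2 := by
            rw [← Real.exp_log (show (0:ℝ) < (1 + t)/2 by linarith)]
            exact Real.exp_le_exp.mpr hk2
        _ ≤ _ := by linarith [half]
end

section
/- Define $L_v(t) := \frac{1}{\log t}\left(\frac{1-v}{v}(t - t^{1-v}) + \frac{v}{1-v}(t^{1-v}-1)\right)$ for $t > 0$, $t \ne 1$, $v \in (0,1)$. Then for fixed $t$, the function $v \mapsto L_v(t)$ is monotone increasing in $v$ when $0 < t \le 1$ and monotone decreasing in $v$ when $t \ge 1$. -/
open Real

private lemma keyG (c v : ℝ) (hv : 0 < v) (hv1 : v < 1) :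
    v^2*(Real.exp ((1-v)*c) - 1) - (1-v)^2*(Real.exp c - Real.exp ((1-v)*c))
      + v*(1-v)*(1-2*v)*c*Real.exp ((1-v)*c) ≤ 0 := by
  set X := Real.exp ((1-v)*c) with hXdef
  have hX : 0 < X := Real.exp_pos _
  have hx : Real.exp c = Real.exp (v*c) * X := by
    rw [hXdef, ← Real.exp_add]; ring_nf
  have h1 : 1 + v*c ≤ Real.exp (v*c) := by
    have := Real.add_one_le_exp (v*c); linarith
  have h2 : 1 - (1-v)*c ≤ Real.exp (-((1-v)*c)) := by
    have := Real.add_one_le_exp (-((1-v)*c)); linarith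
  have h3 : Real.exp (-((1-v)*c)) * X = 1 := by
    rw [hXdef, ← Real.exp_add]; simp
  have p1 : (1 + v*c) * X ≤ Real.exp c := by
    rw [hx]; exact mul_le_mul_of_nonneg_right h1 hX.le
  have p2 : (1 - (1-v)*c) * X ≤ 1 := by
    have := mul_le_mul_of_nonneg_right h2 hX.le
    rwa [h3] at this
  nlinarith [mul_le_mul_of_nonneg_left p1 (sq_nonneg (1-v)),
    mul_le_mul_of_nonneg_left p2 (sq_nonneg v)]

noncomputable def gfun (t : ℝ) : ℝ → ℝ := fun v =>
  (1 / Real.log t) * ((1 - v) / v * (t - Real.exp ((1 - v) * Real.log t))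
    + v / (1 - v) * (Real.exp ((1 - v) * Real.log t) - 1))

noncomputable def Fv (t v : ℝ) : ℝ :=
  v^2*(Real.exp ((1-v)*Real.log t) - 1) - (1-v)^2*(t - Real.exp ((1-v)*Real.log t))
    + v*(1-v)*(1-2*v)*Real.log t*Real.exp ((1-v)*Real.log t)

private lemma hasD (t : ℝ) (v : ℝ) (hv : 0 < v) (hv1 : v < 1) :
    HasDerivAt (gfun t) ((1/Real.log t) * (Fv t v / (v^2*(1-v)^2))) v := by
  set L := Real.log t with hL
  have hv0 : v ≠ 0 := ne_of_gt hv
  have hv1' : (1:ℝ) - v ≠ 0 := by linarith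
  have hdexp : HasDerivAt (fun x : ℝ => Real.exp ((1-x)*L)) (-L * Real.exp ((1-v)*L)) v := by
    have h : HasDerivAt (fun x : ℝ => (1-x)*L) (-L) v := by
      simpa using ((hasDerivAt_id v).const_sub 1).mul_const L
    simpa [mul_comm] using h.exp
  have h1 : HasDerivAt (fun x:ℝ => (1-x)/x) (-1/v^2) v := by
    have := (((hasDerivAt_id v).const_sub 1)).div (hasDerivAt_id v) hv0
    refine this.congr_deriv ?_
    simp only [id]
    ring
  have h2 : HasDerivAt (fun x:ℝ => x/(1-x)) (1/(1-v)^2) v := by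
    have := (hasDerivAt_id v).div ((hasDerivAt_id v).const_sub 1) hv1'
    refine this.congr_deriv ?_
    simp only [id]
    ring
  have h3 : HasDerivAt (fun x : ℝ => t - Real.exp ((1-x)*L))
      (L * Real.exp ((1-v)*L)) v := by
    simpa using hdexp.const_sub t
  have h4 : HasDerivAt (fun x : ℝ => Real.exp ((1-x)*L) - 1)
      (-L * Real.exp ((1-v)*L)) v := hdexp.sub_const 1
  have hsum := ((h1.mul h3).add (h2.mul h4)).const_mul (1/L)
  refine HasDerivAt.congr_deriv (f := gfun t) hsum ?_
  congr 1
  symm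
  rw [Fv, ← hL]
  field_simp
  ring

private lemma signF (t v : ℝ) (ht : 0 < t) (hv : 0 < v) (hv1 : v < 1) :
    Fv t v ≤ 0 := by
  have h := keyG (Real.log t) v hv hv1
  rw [Real.exp_log ht] at h
  exact h

private lemma gmono (t : ℝ) (ht : 0 < t) (ht1 : t ≠ 1) (v w : ℝ)
    (hv : 0 < v) (hv1 : v < 1) (hw : 0 < w) (hw1 : w < 1) (hvw : v ≤ w) :
    (t < 1 → gfun t v ≤ gfun t w) ∧ (1 < t → gfun t w ≤ gfun t v) := by
  have hsub : Set.Icc v w ⊆ Set.Ioo (0:ℝ) 1 := fun x hx =>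
    ⟨lt_of_lt_of_le hv hx.1, lt_of_le_of_lt hx.2 hw1⟩
  have hint : interior (Set.Icc v w) ⊆ Set.Ioo (0:ℝ) 1 := by
    rw [interior_Icc]; exact fun x hx => hsub ⟨hx.1.le, hx.2.le⟩
  have hcont : ContinuousOn (gfun t) (Set.Icc v w) := fun x hx =>
    ((hasD t x (hsub hx).1 (hsub hx).2).continuousAt).continuousWithinAt
  have hdiff : DifferentiableOn ℝ (gfun t) (interior (Set.Icc v w)) := fun x hx =>
    ((hasD t x (hint hx).1 (hint hx).2).differentiableAt).differentiableWithinAt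
  constructor
  · intro htlt
    have hL : Real.log t < 0 := Real.log_neg ht htlt
    have := monotoneOn_of_deriv_nonneg (convex_Icc v w) hcont hdiff (fun x hx => by
      rw [(hasD t x (hint hx).1 (hint hx).2).deriv]
      have hF := signF t x ht (hint hx).1 (hint hx).2
      have hden : (0:ℝ) < x^2*(1-x)^2 :=
        mul_pos (pow_pos (hint hx).1 2) (pow_pos (by linarith [(hint hx).2]) 2)
      have h0 : Fv t x / (x^2*(1-x)^2) ≤ 0 := div_nonpos_of_nonpos_of_nonneg hF hden.le
      have h1L : 1/Real.log t < 0 := div_neg_of_pos_of_neg one_pos hL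
      exact mul_nonneg_iff.2 (Or.inr ⟨h1L.le, h0⟩))
    exact this (Set.left_mem_Icc.2 hvw) (Set.right_mem_Icc.2 hvw) hvw
  · intro htgt
    have hL : 0 < Real.log t := Real.log_pos htgt
    have := antitoneOn_of_deriv_nonpos (convex_Icc v w) hcont hdiff (fun x hx => by
      rw [(hasD t x (hint hx).1 (hint hx).2).deriv]
      have hF := signF t x ht (hint hx).1 (hint hx).2
      have hden : (0:ℝ) < x^2*(1-x)^2 :=
        mul_pos (pow_pos (hint hx).1 2) (pow_pos (by linarith [(hint hx).2]) 2)
      have h0 : Fv t x / (x^2*(1-x)^2) ≤ 0 := div_nonpos_of_nonpos_of_nonneg hF hden.le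
      have h1L : 0 < 1/Real.log t := by positivity
      exact mul_nonpos_iff.2 (Or.inl ⟨h1L.le, h0⟩))
    exact this (Set.left_mem_Icc.2 hvw) (Set.right_mem_Icc.2 hvw) hvw

theorem stmt6 (t : ℝ) (ht : 0 < t) (ht1 : t ≠ 1) :
    (t ≤ 1 → ∀ v w : ℝ, 0 < v → v < 1 → 0 < w → w < 1 → v ≤ w →
      (1 / Real.log t) * ((1 - v) / v * (t - t ^ (1 - v)) + v / (1 - v) * (t ^ (1 - v) - 1)) ≤
      (1 / Real.log t) * ((1 - w) / w * (t - t ^ (1 - w)) + w / (1 - w) * (t ^ (1 - w) - 1))) ∧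
    (1 ≤ t → ∀ v w : ℝ, 0 < v → v < 1 → 0 < w → w < 1 → v ≤ w →
      (1 / Real.log t) * ((1 - w) / w * (t - t ^ (1 - w)) + w / (1 - w) * (t ^ (1 - w) - 1)) ≤
      (1 / Real.log t) * ((1 - v) / v * (t - t ^ (1 - v)) + v / (1 - v) * (t ^ (1 - v) - 1))) := by
  have hrp : ∀ x : ℝ, t ^ (1 - x) = Real.exp ((1 - x) * Real.log t) := by
    intro x
    rw [Real.rpow_def_of_pos ht, mul_comm]
  constructor
  · intro htle v w hv hv1 hw hw1 hvw
    have htlt : t < 1 := lt_of_le_of_ne htle ht1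
    have := (gmono t ht ht1 v w hv hv1 hw hw1 hvw).1 htlt
    simpa [gfun, hrp] using this
  · intro htge v w hv hv1 hw hw1 hvw
    have htgt : 1 < t := lt_of_le_of_ne htge (Ne.symm ht1)
    have := (gmono t ht ht1 v w hv hv1 hw hw1 hvw).2 htgt
    simpa [gfun, hrp] using this
end

section
/- For $a, b > 0$ and $v \in (0,1)$, one has $\frac{2ab}{a+b} \le \sqrt{\frac{1}{\frac{1-v}{a}+\frac{v}{b}} \cdot \frac{1}{\frac{v}{a}+\frac{1-v}{b}}} \le \sqrt{ab}$. -/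
theorem stmt8 (a b v : ℝ) (ha : 0 < a) (hb : 0 < b) (hv0 : 0 < v) (hv1 : v < 1) :
    2 * a * b / (a + b) ≤
      Real.sqrt ((1 / ((1 - v) / a + v / b)) * (1 / (v / a + (1 - v) / b))) ∧
    Real.sqrt ((1 / ((1 - v) / a + v / b)) * (1 / (v / a + (1 - v) / b))) ≤ Real.sqrt (a * b) := by
  have hv1' : 0 < 1 - v := by linarith
  have hp : 0 < (1 - v) / a + v / b := by positivity
  have hq : 0 < v / a + (1 - v) / b := by positivity
  have hab : 0 < a + b := by linarith
  set x := (1 - v) / a + v / b with hx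
  set y := v / a + (1 - v) / b with hy
  clear_value x y
  have hsum : x + y = (a + b) / (a * b) := by rw [hx, hy]; field_simp; ring
  constructor
  · rw [Real.le_sqrt (by positivity), one_div_mul_one_div]
    have h1 : x * y ≤ ((x + y) / 2) ^ 2 := by nlinarith [sq_nonneg (x - y)]
    have h2 : ((x + y) / 2) ^ 2 = ((a + b) / (2 * a * b)) ^ 2 := by
      rw [hsum]; ring
    have key : x * y ≤ ((a + b) / (2 * a * b)) ^ 2 := h2 ▸ h1
    calc (2 * a * b / (a + b)) ^ 2 = 1 / ((a + b) / (2 * a * b)) ^ 2 := by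
          rw [one_div, ← inv_pow, inv_div]
      _ ≤ 1 / (x * y) := by
          apply one_div_le_one_div_of_le (by positivity) key
    · positivity
  · apply Real.sqrt_le_sqrt
    rw [one_div_mul_one_div, div_le_iff₀ (by positivity)]
    have expand : a * b * (x * y) = 1 + v * (1 - v) * (a - b) ^ 2 / (a * b) := by
      rw [hx, hy]; field_simp; ring
    rw [expand]
    have : 0 ≤ v * (1 - v) * (a - b) ^ 2 / (a * b) := by positivity
    linarith
end

section
/- For $a, b > 0$ and $v \in (0,1)$, one has $\frac{2ab}{a+b} \le \frac{2}{\frac{1}{a^{1-v}b^v} + \frac{1}{a^v b^{1-v}}} \le \sqrt{ab}$. -/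
theorem stmt9 (a b v : ℝ) (ha : 0 < a) (hb : 0 < b) (hv0 : 0 < v) (hv1 : v < 1) :
    2 * a * b / (a + b) ≤ 2 / (1 / (a ^ (1 - v) * b ^ v) + 1 / (a ^ v * b ^ (1 - v))) ∧
    2 / (1 / (a ^ (1 - v) * b ^ v) + 1 / (a ^ v * b ^ (1 - v))) ≤ Real.sqrt (a * b) := by
  set x := a ^ (1 - v) * b ^ v with hxdef
  set y := a ^ v * b ^ (1 - v) with hydef
  have hx0 : 0 < x := mul_pos (Real.rpow_pos_of_pos ha _) (Real.rpow_pos_of_pos hb _)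
  have hy0 : 0 < y := mul_pos (Real.rpow_pos_of_pos ha _) (Real.rpow_pos_of_pos hb _)
  have hxy : x * y = a * b := by
    rw [hxdef, hydef, mul_mul_mul_comm, ← Real.rpow_add ha, ← Real.rpow_add hb]
    norm_num
  have ha' : a = a ^ v * a ^ (1 - v) := by
    rw [← Real.rpow_add ha]; norm_num
  have hb' : b = b ^ v * b ^ (1 - v) := by
    rw [← Real.rpow_add hb]; norm_num
  have hsum : x + y ≤ a + b := by
    rcases le_total a b with h | h
    · have h1 : a ^ v ≤ b ^ v := Real.rpow_le_rpow ha.le h hv0.le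
      have h2 : a ^ (1 - v) ≤ b ^ (1 - v) := Real.rpow_le_rpow ha.le h (by linarith)
      nlinarith [mul_nonneg (sub_nonneg.2 h1) (sub_nonneg.2 h2)]
    · have h1 : b ^ v ≤ a ^ v := Real.rpow_le_rpow hb.le h hv0.le
      have h2 : b ^ (1 - v) ≤ a ^ (1 - v) := Real.rpow_le_rpow hb.le h (by linarith)
      nlinarith [mul_nonneg (sub_nonneg.2 h1) (sub_nonneg.2 h2)]
  have hH : 2 / (1 / x + 1 / y) = 2 * a * b / (x + y) := by
    rw [div_add_div _ _ (ne_of_gt hx0) (ne_of_gt hy0)]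
    rw [div_div_eq_mul_div]
    rw [hxy]
    ring_nf
  rw [hH]
  constructor
  · apply div_le_div_of_nonneg_left (by positivity) (by positivity) hsum
  · set s := Real.sqrt (a * b) with hs
    have hs0 : 0 < s := Real.sqrt_pos.2 (by positivity)
    have hss : s * s = a * b := Real.mul_self_sqrt (by positivity)
    have hsxy : Real.sqrt x * Real.sqrt y = s := by
      rw [hs, ← hxy, Real.sqrt_mul hx0.le]
    have h2s : 2 * s ≤ x + y := by
      nlinarith [sq_nonneg (Real.sqrt x - Real.sqrt y), Real.mul_self_sqrt hx0.le,
        Real.mul_self_sqrt hy0.le, hsxy]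
    rw [div_le_iff₀ (by positivity)]
    nlinarith
end

section
/- For $a, b > 0$ with $a \ne b$ and $v \in (0,1)$, one has $L(a,b) \le \frac{1}{2} L_v(a,b) + \frac{1}{2} L_{1-v}(a,b) \le \frac{a+b}{2}$, where $L(a,b) = \frac{a-b}{\log a - \log b}$ and $L_v(a,b) = \frac{1}{\log a - \log b}\left(\frac{1-v}{v}(a - a^{1-v}b^v) + \frac{v}{1-v}(a^{1-v}b^v - b)\right)$. -/
open Real MeasureTheory intervalIntegral

private lemma key10 (a b v : ℝ) (ha : 0 < a) (hb : 0 < b) (hab : a ≠ b)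
    (hv0 : 0 < v) (hv1 : v < 1) (hv2 : v ≤ 1/2) :
    (a - b) / (Real.log a - Real.log b) ≤
      (1 / 2) * ((1 / (Real.log a - Real.log b)) *
        ((1 - v) / v * (a - a ^ (1 - v) * b ^ v) + v / (1 - v) * (a ^ (1 - v) * b ^ v - b))) +
      (1 / 2) * ((1 / (Real.log a - Real.log b)) *
        (v / (1 - v) * (a - a ^ v * b ^ (1 - v)) + (1 - v) / v * (a ^ v * b ^ (1 - v) - b))) ∧
    (1 / 2) * ((1 / (Real.log a - Real.log b)) *
        ((1 - v) / v * (a - a ^ (1 - v) * b ^ v) + v / (1 - v) * (a ^ (1 - v) * b ^ v - b))) +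
      (1 / 2) * ((1 / (Real.log a - Real.log b)) *
        (v / (1 - v) * (a - a ^ v * b ^ (1 - v)) + (1 - v) / v * (a ^ v * b ^ (1 - v) - b)))
      ≤ (a + b) / 2 := by
  have hv1' : (0:ℝ) < 1 - v := by linarith
  have hw : (0:ℝ) ≤ 1 - 2*v := by linarith
  set p := Real.log a with hp
  set q := Real.log b with hq
  set t := p - q with htd
  have ht : t ≠ 0 := by
    have hpq : p ≠ q := by
      intro h
      exact hab (by rw [← Real.exp_log ha, ← Real.exp_log hb, ← hp, ← hq, h])
    exact sub_ne_zero.mpr hpq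
  set E : ℝ → ℝ := fun s => Real.exp (q + s * t) with hE
  have hEc : Continuous E := by
    apply Real.continuous_exp.comp
    continuity
  have hEc' : Continuous (fun s => E (1 - s)) := hEc.comp (continuous_const.sub continuous_id)
  have hInt : ∀ x y : ℝ, IntervalIntegrable E volume x y :=
    fun x y => hEc.intervalIntegrable x y
  have hInt' : ∀ x y : ℝ, IntervalIntegrable (fun s => E (1 - s)) volume x y :=
    fun x y => hEc'.intervalIntegrable x y
  -- atoms
  have e1 : a = E 1 := by
    simp only [hE, one_mul, htd]
    rw [show q + (p - q) = p from by ring, Real.exp_log ha]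
  have e0 : b = E 0 := by
    simp only [hE, zero_mul, add_zero]
    rw [Real.exp_log hb]
  have ev : a ^ (1 - v) * b ^ v = E (1 - v) := by
    rw [Real.rpow_def_of_pos ha, Real.rpow_def_of_pos hb, ← Real.exp_add]
    simp only [hE, htd, ← hp, ← hq]
    congr 1
    ring
  have ev' : a ^ v * b ^ (1 - v) = E v := by
    rw [Real.rpow_def_of_pos ha, Real.rpow_def_of_pos hb, ← Real.exp_add]
    simp only [hE, htd, ← hp, ← hq]
    congr 1
    ring
  -- fundamental theorem of calculus
  have hJ : ∀ x y : ℝ, E y - E x = t * ∫ s in x..y, E s := by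
    intro x y
    have hder : ∀ s ∈ Set.uIcc x y, HasDerivAt (fun u => E u / t) (E s) s := by
      intro s _
      have h1 : HasDerivAt (fun u : ℝ => q + u * t) t s := by
        simpa using ((hasDerivAt_id s).mul_const t).const_add q
      have h2 : HasDerivAt (fun u => E u) (Real.exp (q + s * t) * t) s := by
        have := (Real.hasDerivAt_exp (q + s * t)).comp s h1; exact this
      have h3 := h2.div_const t
      simpa [hE, mul_div_assoc, mul_div_cancel_right₀ _ ht] using h3
    have := intervalIntegral.integral_eq_sub_of_hasDerivAt hder (hInt x y)
    rw [this]
    field_simp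
  set I1 := ∫ s in (0:ℝ)..v, E s with hI1
  set I2 := ∫ s in v..(1-v), E s with hI2
  set I3 := ∫ s in (1-v)..1, E s with hI3
  have hsplit1 : ∫ s in (0:ℝ)..(1-v), E s = I1 + I2 :=
    (integral_add_adjacent_intervals (hInt 0 v) (hInt v (1-v))).symm
  have hsplit2 : ∫ s in v..(1:ℝ), E s = I2 + I3 :=
    (integral_add_adjacent_intervals (hInt v (1-v)) (hInt (1-v) 1)).symm
  have hsplit3 : ∫ s in (0:ℝ)..(1:ℝ), E s = I1 + (I2 + I3) := by
    rw [← integral_add_adjacent_intervals (hInt 0 v) (hInt v 1), hsplit2]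
  -- pointwise convexity bounds via cosh
  have pw : ∀ x y : ℝ, |x - 1/2| ≤ |y - 1/2| → E x + E (1-x) ≤ E y + E (1-y) := by
    intro x y h
    have key : ∀ z : ℝ, E z + E (1-z)
        = Real.exp (q + t/2) * (2 * Real.cosh ((z - 1/2) * t)) := by
      intro z
      have h1 : E z = Real.exp (q + t/2) * Real.exp ((z - 1/2) * t) := by
        simp only [hE]
        rw [← Real.exp_add]
        congr 1
        ring
      have h2 : E (1-z) = Real.exp (q + t/2) * (Real.exp ((z - 1/2) * t))⁻¹ := by
        simp only [hE]
        rw [← Real.exp_neg, ← Real.exp_add]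
        congr 1
        ring
      rw [h1, h2, Real.cosh_eq, Real.exp_neg]
      ring
    rw [key x, key y]
    have hc : Real.cosh ((x - 1/2) * t) ≤ Real.cosh ((y - 1/2) * t) := by
      rw [Real.cosh_le_cosh, abs_mul, abs_mul]
      exact mul_le_mul_of_nonneg_right h (abs_nonneg t)
    have := Real.exp_pos (q + t/2)
    nlinarith
  have pwge : ∀ s ∈ Set.Icc (0:ℝ) v, E v + E (1-v) ≤ E s + E (1-s) := by
    intro s hs
    apply pw
    have h2 : |v - 1/2| = 1/2 - v := by rw [abs_of_nonpos (by linarith)]; ring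
    have h3 : |s - 1/2| = 1/2 - s := by rw [abs_of_nonpos (by linarith [hs.2])]; ring
    rw [h2, h3]; linarith [hs.2]
  have pwle : ∀ s ∈ Set.Icc v (1-v), E s + E (1-s) ≤ E v + E (1-v) := by
    intro s hs
    apply pw
    have h2 : |v - 1/2| = 1/2 - v := by rw [abs_of_nonpos (by linarith)]; ring
    rw [h2]
    exact abs_le.mpr ⟨by linarith [hs.1], by linarith [hs.2]⟩
  have pw01 : ∀ s ∈ Set.Icc (0:ℝ) 1, E s + E (1-s) ≤ E 0 + E 1 := by
    intro s hs
    have := pw s 0 (by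
      rw [show |(0:ℝ) - 1/2| = 1/2 from by norm_num]
      exact abs_le.mpr ⟨by linarith [hs.1], by linarith [hs.2]⟩)
    simpa using this
  -- substitution s ↦ 1 - s
  have hsubI3 : I3 = ∫ s in (0:ℝ)..v, E (1 - s) := by
    rw [intervalIntegral.integral_comp_sub_left E 1]
    norm_num [hI3]
  have hsubI2 : I2 = ∫ s in v..(1-v), E (1 - s) := by
    rw [intervalIntegral.integral_comp_sub_left E 1]
    rw [show (1:ℝ) - (1 - v) = v from by ring]
  -- the four integral estimates
  have F1 : v * (E v + E (1-v)) ≤ I1 + I3 := by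
    calc v * (E v + E (1-v)) = ∫ _ in (0:ℝ)..v, (E v + E (1-v)) := by
          rw [intervalIntegral.integral_const, smul_eq_mul]; ring
      _ ≤ ∫ s in (0:ℝ)..v, (E s + E (1-s)) :=
          intervalIntegral.integral_mono_on hv0.le intervalIntegrable_const
            ((hInt 0 v).add (hInt' 0 v)) pwge
      _ = I1 + I3 := by
          rw [intervalIntegral.integral_add (hInt 0 v) (hInt' 0 v), ← hsubI3, hI1]
  have F2 : 2 * I2 ≤ (1 - 2*v) * (E v + E (1-v)) := by
    calc 2 * I2 = ∫ s in v..(1-v), (E s + E (1-s)) := by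
          rw [intervalIntegral.integral_add (hInt v (1-v)) (hInt' v (1-v)), ← hsubI2, hI2]; ring
      _ ≤ ∫ _ in v..(1-v), (E v + E (1-v)) :=
          intervalIntegral.integral_mono_on (by linarith) ((hInt v (1-v)).add (hInt' v (1-v)))
            intervalIntegrable_const pwle
      _ = (1 - 2*v) * (E v + E (1-v)) := by
          rw [intervalIntegral.integral_const, smul_eq_mul]; ring
  have F3 : I1 + I3 ≤ v * (E 0 + E 1) := by
    calc I1 + I3 = ∫ s in (0:ℝ)..v, (E s + E (1-s)) := by
          rw [intervalIntegral.integral_add (hInt 0 v) (hInt' 0 v), ← hsubI3, hI1]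
      _ ≤ ∫ _ in (0:ℝ)..v, (E 0 + E 1) :=
          intervalIntegral.integral_mono_on hv0.le ((hInt 0 v).add (hInt' 0 v))
            intervalIntegrable_const
            (fun s hs => pw01 s ⟨hs.1, by linarith [hs.2]⟩)
      _ = v * (E 0 + E 1) := by rw [intervalIntegral.integral_const, smul_eq_mul]; ring
  have F4 : 2 * I2 ≤ (1 - 2*v) * (E 0 + E 1) := by
    calc 2 * I2 = ∫ s in v..(1-v), (E s + E (1-s)) := by
          rw [intervalIntegral.integral_add (hInt v (1-v)) (hInt' v (1-v)), ← hsubI2, hI2]; ring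
      _ ≤ ∫ _ in v..(1-v), (E 0 + E 1) :=
          intervalIntegral.integral_mono_on (by linarith)
            ((hInt v (1-v)).add (hInt' v (1-v))) intervalIntegrable_const
            (fun s hs => pw01 s ⟨by linarith [hs.1], by linarith [hs.2]⟩)
      _ = (1 - 2*v) * (E 0 + E 1) := by rw [intervalIntegral.integral_const, smul_eq_mul]; ring
  -- rewrite the goal
  rw [ev, ev', e1, e0]
  have g1 : (E 1 - E 0) / t = I1 + (I2 + I3) := by
    rw [hJ 0 1, hsplit3, mul_div_cancel_left₀ _ ht]
  have g2 : 1 / t * ((1 - v) / v * (E 1 - E (1-v)) + v / (1 - v) * (E (1-v) - E 0))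
      = (1 - v) / v * I3 + v / (1 - v) * (I1 + I2) := by
    rw [hJ (1-v) 1, hJ 0 (1-v), hsplit1, ← hI3]
    field_simp
  have g3 : 1 / t * (v / (1 - v) * (E 1 - E v) + (1 - v) / v * (E v - E 0))
      = v / (1 - v) * (I2 + I3) + (1 - v) / v * I1 := by
    rw [hJ v 1, hJ 0 v, hsplit2, ← hI1]
    field_simp
  rw [g1, g2, g3]
  have hExp : ∀ z : ℝ, 0 < E z := fun z => Real.exp_pos _
  have hGpos : (0:ℝ) < E v + E (1-v) := add_pos (hExp v) (hExp (1-v))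
  have hSpos : (0:ℝ) < E 0 + E 1 := add_pos (hExp 0) (hExp 1)
  clear_value I1 I2 I3
  set X0 := E 0 with hX0
  set X1 := E 1 with hX1
  set Xv := E v with hXv
  set Xw := E (1-v) with hXw
  clear_value X0 X1 Xv Xw
  clear hI1 hI2 hI3 hsplit1 hsplit2 hsplit3 hJ hsubI3 hsubI2 g1 g2 g3 hInt hInt' pw pwge pwle
    pw01 hEc hEc' e1 e0 ev ev' hExp hX0 hX1 hXv hXw
  clear hE E ht htd t hq q hp p hab ha hb a b
  have hmul : (0:ℝ) < 2 * v * (1 - v) := by positivity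
  have hre : 2 * v * (1 - v) * (1 / 2 * ((1 - v) / v * I3 + v / (1 - v) * (I1 + I2))
      + 1 / 2 * (v / (1 - v) * (I2 + I3) + (1 - v) / v * I1))
      = ((1 - v)^2 + v^2) * (I1 + I3) + 2 * v^2 * I2 := by
    field_simp
    ring
  constructor
  · have s1 := mul_le_mul_of_nonneg_left F2 (mul_nonneg hv0.le hw)
    have s2 := mul_le_mul_of_nonneg_left F1 (sq_nonneg (1 - 2*v))
    refine (mul_le_mul_iff_right₀ hmul).mp ?_
    rw [hre]
    linarith [s1, s2]
  · have s3 := mul_le_mul_of_nonneg_left F3 (show (0:ℝ) ≤ (1 - v)^2 + v^2 by positivity)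
    have s4 := mul_le_mul_of_nonneg_left F4 (sq_nonneg v)
    refine (mul_le_mul_iff_right₀ hmul).mp ?_
    rw [hre]
    linarith [s3, s4]

theorem stmt10 (a b v : ℝ) (ha : 0 < a) (hb : 0 < b) (hab : a ≠ b)
    (hv0 : 0 < v) (hv1 : v < 1) :
    (a - b) / (Real.log a - Real.log b) ≤
      (1 / 2) * ((1 / (Real.log a - Real.log b)) *
        ((1 - v) / v * (a - a ^ (1 - v) * b ^ v) + v / (1 - v) * (a ^ (1 - v) * b ^ v - b))) +
      (1 / 2) * ((1 / (Real.log a - Real.log b)) *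
        (v / (1 - v) * (a - a ^ v * b ^ (1 - v)) + (1 - v) / v * (a ^ v * b ^ (1 - v) - b))) ∧
    (1 / 2) * ((1 / (Real.log a - Real.log b)) *
        ((1 - v) / v * (a - a ^ (1 - v) * b ^ v) + v / (1 - v) * (a ^ (1 - v) * b ^ v - b))) +
      (1 / 2) * ((1 / (Real.log a - Real.log b)) *
        (v / (1 - v) * (a - a ^ v * b ^ (1 - v)) + (1 - v) / v * (a ^ v * b ^ (1 - v) - b)))
      ≤ (a + b) / 2 := by
  by_cases hv : v ≤ 1/2
  · exact key10 a b v ha hb hab hv0 hv1 hv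
  · have h := key10 a b (1 - v) ha hb hab (by linarith) (by linarith) (by linarith)
    rw [show (1:ℝ) - (1 - v) = v from by ring] at h
    exact ⟨by linarith [h.1], by linarith [h.2]⟩
end

section
/- For $a, b > 0$ with $a \ne b$ and $v \in [0,1]$ with $v \ne 1/2$, one has $\frac{a-b}{\log a - \log b} \le \frac{\left((1-v)a+vb\right) - \left(va+(1-v)b\right)}{\log\left((1-v)a+vb\right) - \log\left(va+(1-v)b\right)} \le \frac{a+b}{2}$. -/
open Real Set

lemma hasDerivAt_delta {t : ℝ} (h1 : -1 < t) (h2 : t < 1) :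
    HasDerivAt (fun t => Real.log (1+t) - Real.log (1-t)) (1/(1+t) + 1/(1-t)) t := by
  have h1' : (0:ℝ) < 1 + t := by linarith
  have h2' : (0:ℝ) < 1 - t := by linarith
  have d1 : HasDerivAt (fun t : ℝ => Real.log (1+t)) (1/(1+t)) t := by
    have := (Real.hasDerivAt_log h1'.ne').comp t ((hasDerivAt_id t).const_add 1)
    simpa [one_div, Function.comp_def] using this
  have d2 : HasDerivAt (fun t : ℝ => Real.log (1-t)) (-(1/(1-t))) t := by
    have := (Real.hasDerivAt_log h2'.ne').comp t ((hasDerivAt_id t).const_sub 1)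
    simpa [one_div, Function.comp_def] using this
  have := d1.sub d2
  rw [show 1/(1+t) + 1/(1-t) = 1/(1+t) - -(1/(1-t)) by ring]
  exact this

lemma delta_ge {t : ℝ} (h0 : 0 ≤ t) (h1 : t < 1) :
    2*t ≤ Real.log (1+t) - Real.log (1-t) := by
  set f : ℝ → ℝ := fun t => Real.log (1+t) - Real.log (1-t) - 2*t with hf
  have hd : ∀ x ∈ Ico (0:ℝ) 1, HasDerivAt f (1/(1+x) + 1/(1-x) - 2) x := by
    intro x hx
    have h2x : HasDerivAt (fun t : ℝ => 2*t) 2 x := by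
      simpa using (hasDerivAt_id x).const_mul 2
    exact (hasDerivAt_delta (by linarith [hx.1]) hx.2).sub h2x
  have hmono : MonotoneOn f (Ico (0:ℝ) 1) := by
    apply monotoneOn_of_deriv_nonneg (convex_Ico 0 1)
    · intro x hx
      exact ((hd x hx).differentiableAt).continuousAt.continuousWithinAt
    · intro x hx
      rw [interior_Ico] at hx
      exact ((hd x ⟨hx.1.le, hx.2⟩).differentiableAt).differentiableWithinAt
    · intro x hx
      rw [interior_Ico] at hx
      rw [(hd x ⟨hx.1.le, hx.2⟩).deriv]
      have hx1 : (0:ℝ) < 1 + x := by linarith [hx.1]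
      have hx2 : (0:ℝ) < 1 - x := by linarith [hx.2]
      rw [div_add_div _ _ hx1.ne' hx2.ne', sub_nonneg, le_div_iff₀ (by positivity)]
      nlinarith [sq_nonneg x, hx.1]
  have h0' : f 0 = 0 := by simp [hf]
  have := hmono (by constructor <;> norm_num) (⟨h0, h1⟩ : t ∈ Ico (0:ℝ) 1) h0
  rw [h0'] at this
  simp only [hf] at this
  linarith

lemma delta_le {t : ℝ} (h0 : 0 ≤ t) (h1 : t < 1) :
    Real.log (1+t) - Real.log (1-t) ≤ 2*t/(1-t^2) := by
  set f : ℝ → ℝ := fun t => 2*t/(1-t^2) - (Real.log (1+t) - Real.log (1-t)) with hf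
  have hd : ∀ x ∈ Ico (0:ℝ) 1, HasDerivAt f ((2+2*x^2)/(1-x^2)^2 - (1/(1+x) + 1/(1-x))) x := by
    intro x hx
    have hx2 : (1:ℝ) - x^2 ≠ 0 := by nlinarith [hx.1, hx.2]
    have dq : HasDerivAt (fun t : ℝ => 2*t/(1-t^2)) ((2+2*x^2)/(1-x^2)^2) x := by
      have h1 : HasDerivAt (fun t : ℝ => 2*t) 2 x := by
        simpa using (hasDerivAt_id x).const_mul 2
      have h2 : HasDerivAt (fun t : ℝ => 1-t^2) (-(2*x)) x := by
        simpa using ((hasDerivAt_pow 2 x).const_sub 1)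
      have := h1.div h2 hx2
      rw [show (2+2*x^2)/(1-x^2)^2 = (2 * (1 - x ^ 2) - 2 * x * -(2 * x)) / (1 - x ^ 2) ^ 2 by ring]
      exact this
    exact dq.sub (hasDerivAt_delta (by linarith [hx.1]) hx.2)
  have hmono : MonotoneOn f (Ico (0:ℝ) 1) := by
    apply monotoneOn_of_deriv_nonneg (convex_Ico 0 1)
    · intro x hx
      exact ((hd x hx).differentiableAt).continuousAt.continuousWithinAt
    · intro x hx
      rw [interior_Ico] at hx
      exact ((hd x ⟨hx.1.le, hx.2⟩).differentiableAt).differentiableWithinAt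
    · intro x hx
      rw [interior_Ico] at hx
      rw [(hd x ⟨hx.1.le, hx.2⟩).deriv]
      have hx1 : (0:ℝ) < 1 + x := by linarith [hx.1]
      have hx2 : (0:ℝ) < 1 - x := by linarith [hx.2]
      have e : 1/(1+x) + 1/(1-x) = 2/(1-x^2) := by
        rw [div_add_div _ _ hx1.ne' hx2.ne']
        congr 1 <;> ring
      have hx3 : (0:ℝ) < 1 - x^2 := by nlinarith [hx.1, hx.2]
      rw [e, sub_nonneg, div_le_div_iff₀ hx3 (by positivity)]
      nlinarith [sq_nonneg x, hx3, mul_nonneg (sq_nonneg x) hx3.le]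
  have h0' : f 0 = 0 := by simp [hf]
  have := hmono (by constructor <;> norm_num) (⟨h0, h1⟩ : t ∈ Ico (0:ℝ) 1) h0
  rw [h0'] at this
  simp only [hf] at this
  linarith

lemma g_mono : MonotoneOn (fun t => (Real.log (1+t) - Real.log (1-t))/t) (Ioo (0:ℝ) 1) := by
  have hd : ∀ x ∈ Ioo (0:ℝ) 1, HasDerivAt (fun t => (Real.log (1+t) - Real.log (1-t))/t)
      (((1/(1+x) + 1/(1-x))*x - (Real.log (1+x) - Real.log (1-x)))/x^2) x := by
    intro x hx
    have := (hasDerivAt_delta (by linarith [hx.1]) hx.2).div (hasDerivAt_id x) (ne_of_gt hx.1)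
    simpa [Pi.div_def] using this
  apply monotoneOn_of_deriv_nonneg (convex_Ioo 0 1)
  · intro x hx
    exact ((hd x hx).differentiableAt).continuousAt.continuousWithinAt
  · intro x hx
    rw [interior_Ioo] at hx
    exact ((hd x hx).differentiableAt).differentiableWithinAt
  · intro x hx
    rw [interior_Ioo] at hx
    rw [(hd x hx).deriv]
    apply div_nonneg _ (sq_nonneg x)
    rw [sub_nonneg]
    have hx1 : (0:ℝ) < 1 + x := by linarith [hx.1]
    have hx2 : (0:ℝ) < 1 - x := by linarith [hx.2]
    have hx3 : (0:ℝ) < 1 - x^2 := by nlinarith [hx.1, hx.2]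
    have e : (1/(1+x) + 1/(1-x))*x = 2*x/(1-x^2) := by
      field_simp
      ring
    rw [e]
    exact delta_le hx.1.le hx.2

lemma delta_pos {t : ℝ} (h0 : 0 < t) (h1 : t < 1) :
    0 < Real.log (1+t) - Real.log (1-t) := lt_of_lt_of_le (by linarith) (delta_ge h0.le h1)

lemma lower_core {t T : ℝ} (h0 : 0 < t) (htT : t ≤ T) (hT : T < 1) :
    T / (Real.log (1+T) - Real.log (1-T)) ≤ t / (Real.log (1+t) - Real.log (1-t)) := by
  have hT0 : 0 < T := lt_of_lt_of_le h0 htT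
  have ht1 : t < 1 := lt_of_le_of_lt htT hT
  have hdt := delta_pos h0 ht1
  have hdT := delta_pos hT0 hT
  have hg := g_mono ⟨h0, ht1⟩ ⟨hT0, hT⟩ htT
  simp only at hg
  have hgt : 0 < (Real.log (1+t) - Real.log (1-t))/t := div_pos hdt h0
  calc T / (Real.log (1+T) - Real.log (1-T))
      = 1 / ((Real.log (1+T) - Real.log (1-T))/T) := by rw [one_div_div]
    _ ≤ 1 / ((Real.log (1+t) - Real.log (1-t))/t) := one_div_le_one_div_of_le hgt hg
    _ = t / (Real.log (1+t) - Real.log (1-t)) := by rw [one_div_div]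

lemma upper_core {t : ℝ} (h0 : 0 < t) (h1 : t < 1) :
    t / (Real.log (1+t) - Real.log (1-t)) ≤ 1/2 := by
  have hdt := delta_pos h0 h1
  rw [div_le_div_iff₀ hdt (by norm_num)]
  linarith [delta_ge h0.le h1]

lemma aux (a b v : ℝ) (hb : 0 < b) (hba : b < a) (hv0 : 0 ≤ v) (hv : v < 1/2) :
    (a - b) / (Real.log a - Real.log b) ≤
      (((1 - v) * a + v * b) - (v * a + (1 - v) * b)) /
        (Real.log ((1 - v) * a + v * b) - Real.log (v * a + (1 - v) * b)) ∧
    (((1 - v) * a + v * b) - (v * a + (1 - v) * b)) /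
        (Real.log ((1 - v) * a + v * b) - Real.log (v * a + (1 - v) * b)) ≤ (a + b) / 2 := by
  have ha : 0 < a := lt_trans hb hba
  have hs0 : 0 < a + b := by linarith
  have hD0 : 0 < a - b := by linarith
  have hd0 : 0 < (1-2*v)*(a-b) := by nlinarith
  have hdD : (1-2*v)*(a-b) ≤ a - b := by nlinarith
  have hDs : a - b < a + b := by linarith
  have hds : (1-2*v)*(a-b) < a + b := lt_of_le_of_lt hdD hDs
  have key : ∀ e : ℝ, 0 < e → e < a+b →
      Real.log ((a+b+e)/2) - Real.log ((a+b-e)/2)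
        = Real.log (1+e/(a+b)) - Real.log (1-e/(a+b)) := by
    intro e he0 hes
    have h1e : e/(a+b) < 1 := (div_lt_one hs0).2 hes
    have h1e0 : 0 < 1 - e/(a+b) := by linarith
    have h2e0 : 0 < 1 + e/(a+b) := by positivity
    have h1 : (a+b+e)/2 = ((a+b)/2)*(1+e/(a+b)) := by field_simp
    have h2 : (a+b-e)/2 = ((a+b)/2)*(1-e/(a+b)) := by field_simp
    rw [h1, h2, Real.log_mul (by positivity) h2e0.ne', Real.log_mul (by positivity) h1e0.ne']
    ring
  have la : Real.log a - Real.log b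
      = Real.log (1+(a-b)/(a+b)) - Real.log (1-(a-b)/(a+b)) := by
    have := key (a-b) hD0 hDs
    rw [show (a+b+(a-b))/2 = a by ring, show (a+b-(a-b))/2 = b by ring] at this
    exact this
  have lx : Real.log ((1-v)*a+v*b) - Real.log (v*a+(1-v)*b)
      = Real.log (1+((1-2*v)*(a-b))/(a+b)) - Real.log (1-((1-2*v)*(a-b))/(a+b)) := by
    have := key ((1-2*v)*(a-b)) hd0 hds
    rw [show (a+b+(1-2*v)*(a-b))/2 = (1-v)*a+v*b by ring,
        show (a+b-(1-2*v)*(a-b))/2 = v*a+(1-v)*b by ring] at this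
    exact this
  have hmid : ((1-v)*a+v*b) - (v*a+(1-v)*b) = (1-2*v)*(a-b) := by ring
  have ht0 : 0 < ((1-2*v)*(a-b))/(a+b) := div_pos hd0 hs0
  have htT : ((1-2*v)*(a-b))/(a+b) ≤ (a-b)/(a+b) := by gcongr
  have hT1 : (a-b)/(a+b) < 1 := (div_lt_one hs0).2 hDs
  have h1 := lower_core ht0 htT hT1
  have h2 := upper_core ht0 (lt_of_le_of_lt htT hT1)
  constructor
  · rw [la, lx, hmid]
    have hm := mul_le_mul_of_nonneg_left h1 hs0.le
    calc (a-b)/(Real.log (1+(a-b)/(a+b)) - Real.log (1-(a-b)/(a+b)))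
        = (a+b) * ((a-b)/(a+b)
            / (Real.log (1+(a-b)/(a+b)) - Real.log (1-(a-b)/(a+b)))) := by
          rw [← mul_div_assoc, ← mul_div_assoc, mul_div_cancel_left₀ _ hs0.ne']
      _ ≤ (a+b) * (((1-2*v)*(a-b))/(a+b)
            / (Real.log (1+((1-2*v)*(a-b))/(a+b))
                - Real.log (1-((1-2*v)*(a-b))/(a+b)))) := hm
      _ = ((1-2*v)*(a-b))
            / (Real.log (1+((1-2*v)*(a-b))/(a+b))
                - Real.log (1-((1-2*v)*(a-b))/(a+b))) := by
          rw [← mul_div_assoc, ← mul_div_assoc, mul_div_cancel_left₀ _ hs0.ne']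
  · rw [lx, hmid]
    have hm := mul_le_mul_of_nonneg_left h2 hs0.le
    calc ((1-2*v)*(a-b))
            / (Real.log (1+((1-2*v)*(a-b))/(a+b))
                - Real.log (1-((1-2*v)*(a-b))/(a+b)))
        = (a+b) * (((1-2*v)*(a-b))/(a+b)
            / (Real.log (1+((1-2*v)*(a-b))/(a+b))
                - Real.log (1-((1-2*v)*(a-b))/(a+b)))) := by
          rw [← mul_div_assoc, ← mul_div_assoc, mul_div_cancel_left₀ _ hs0.ne']
      _ ≤ (a+b) * (1/2) := hm
      _ = (a+b)/2 := by ring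

theorem stmt11 (a b v : ℝ) (ha : 0 < a) (hb : 0 < b) (hab : a ≠ b)
    (hv0 : 0 ≤ v) (hv1 : v ≤ 1) (hv : v ≠ 1 / 2) :
    (a - b) / (Real.log a - Real.log b) ≤
      (((1 - v) * a + v * b) - (v * a + (1 - v) * b)) /
        (Real.log ((1 - v) * a + v * b) - Real.log (v * a + (1 - v) * b)) ∧
    (((1 - v) * a + v * b) - (v * a + (1 - v) * b)) /
        (Real.log ((1 - v) * a + v * b) - Real.log (v * a + (1 - v) * b)) ≤ (a + b) / 2 := by
  have flip : ∀ p q : ℝ, (p - q)/(Real.log p - Real.log q)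
      = (q - p)/(Real.log q - Real.log p) := by
    intro p q
    rw [show p - q = -(q-p) by ring,
        show Real.log p - Real.log q = -(Real.log q - Real.log p) by ring, neg_div_neg_eq]
  rcases lt_or_gt_of_ne hab with h | h <;> rcases lt_or_gt_of_ne hv with hv' | hv'
  · -- a < b, v < 1/2 : use aux b a v
    have H := aux b a v ha h hv0 hv'
    rw [show (1-v)*b+v*a = v*a+(1-v)*b by ring,
        show v*b+(1-v)*a = (1-v)*a+v*b by ring,
        flip b a, flip (v*a+(1-v)*b) ((1-v)*a+v*b),
        show ((b+a):ℝ)/2 = (a+b)/2 by ring] at H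
    exact H
  · -- a < b, v > 1/2 : use aux b a (1-v)
    have H := aux b a (1-v) ha h (by linarith) (by linarith)
    rw [show (1:ℝ)-(1-v) = v by ring,
        show v*b+(1-v)*a = (1-v)*a+v*b by ring,
        show (1-v)*b+v*a = v*a+(1-v)*b by ring,
        flip b a,
        show ((b+a):ℝ)/2 = (a+b)/2 by ring] at H
    exact H
  · -- a > b, v < 1/2
    exact aux a b v hb h hv0 hv'
  · -- a > b, v > 1/2 : use aux a b (1-v)
    have H := aux a b (1-v) hb h (by linarith) (by linarith)
    rw [show (1:ℝ)-(1-v) = v by ring,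
        flip (v*a+(1-v)*b) ((1-v)*a+v*b)] at H
    exact H
end

section
/- For $t \ge 1$ and $v \in [0, 1/2)$, one has $(1-2v)(t-1) - t^{1-v} + t^v \ge 0$. -/
open Real

/-- Key derivative inequality via weighted AM-GM. -/
lemma stmt12_key (t v : ℝ) (ht : 0 < t) (hv0 : 0 ≤ v) (hv : v < 1 / 2) :
    0 ≤ (1 - 2 * v) - (1 - v) * t ^ (-v) + v * t ^ (v - 1) := by
  have hv1 : 0 < 1 - v := by linarith
  have h2v : 0 ≤ 1 - 2 * v := by linarith
  -- AM-GM with weights (1-2v)/(1-v), v/(1-v) and values t^v, t^(2v-1)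
  have hw : (1 - 2 * v) / (1 - v) + v / (1 - v) = 1 := by
    rw [← add_div, show 1 - 2 * v + v = 1 - v by ring, div_self hv1.ne']
  have hamgm := Real.geom_mean_le_arith_mean2_weighted
    (div_nonneg h2v hv1.le) (div_nonneg hv0 hv1.le)
    (Real.rpow_nonneg ht.le v) (Real.rpow_nonneg ht.le (2 * v - 1)) hw
  have hgm : (t ^ v) ^ ((1 - 2 * v) / (1 - v)) * (t ^ (2 * v - 1)) ^ (v / (1 - v)) = 1 := by
    rw [← Real.rpow_mul ht.le, ← Real.rpow_mul ht.le, ← Real.rpow_add ht]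
    rw [show v * ((1 - 2 * v) / (1 - v)) + (2 * v - 1) * (v / (1 - v)) = 0 by
      field_simp; ring]
    exact Real.rpow_zero t
  rw [hgm] at hamgm
  -- so (1-v) ≤ (1-2v) * t^v + v * t^(2v-1)
  have h1 : 1 - v ≤ (1 - 2 * v) * t ^ v + v * t ^ (2 * v - 1) := by
    have := mul_le_mul_of_nonneg_left hamgm hv1.le
    rw [mul_one] at this
    calc 1 - v ≤ (1 - v) * ((1 - 2 * v) / (1 - v) * t ^ v + v / (1 - v) * t ^ (2 * v - 1)) := this
      _ = (1 - 2 * v) * t ^ v + v * t ^ (2 * v - 1) := by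
          field_simp
  -- multiply by t^(-v) > 0
  have htv : (0:ℝ) < t ^ v := Real.rpow_pos_of_pos ht v
  have h2 := mul_le_mul_of_nonneg_right h1 (Real.rpow_pos_of_pos ht (-v)).le
  rw [add_mul, mul_assoc, mul_assoc, ← Real.rpow_add ht, ← Real.rpow_add ht] at h2
  have e1 : v + -v = 0 := by ring
  have e2 : 2 * v - 1 + -v = v - 1 := by ring
  rw [e1, e2, Real.rpow_zero, mul_one] at h2
  nlinarith [Real.rpow_pos_of_pos ht (-v)]

theorem stmt12 (t v : ℝ) (ht : 1 ≤ t) (hv0 : 0 ≤ v) (hv : v < 1 / 2) :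
    0 ≤ (1 - 2 * v) * (t - 1) - t ^ (1 - v) + t ^ v := by
  set f : ℝ → ℝ := fun x => (1 - 2 * v) * (x - 1) - x ^ (1 - v) + x ^ v with hf
  have hderiv : ∀ x ∈ Set.Ioi (1:ℝ), HasDerivAt f
      ((1 - 2 * v) - (1 - v) * x ^ (-v) + v * x ^ (v - 1)) x := by
    intro x hx
    have hx0 : x ≠ 0 := by have : (1:ℝ) < x := hx; positivity
    have h1 : HasDerivAt (fun y : ℝ => y ^ (1 - v)) ((1 - v) * x ^ (1 - v - 1)) x :=
      Real.hasDerivAt_rpow_const (Or.inl hx0)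
    have h2 : HasDerivAt (fun y : ℝ => y ^ v) (v * x ^ (v - 1)) x :=
      Real.hasDerivAt_rpow_const (Or.inl hx0)
    have h3 : HasDerivAt (fun y : ℝ => (1 - 2 * v) * (y - 1)) (1 - 2 * v) x := by
      simpa using (((hasDerivAt_id x).sub_const 1).const_mul (1 - 2 * v))
    have := (h3.sub h1).add h2
    rw [show 1 - v - 1 = -v by ring] at this
    exact this
  have hcont : ContinuousOn f (Set.Ici (1:ℝ)) := by
    refine ContinuousOn.add (ContinuousOn.sub (by fun_prop) ?_) ?_
    · intro x hx
      exact (Real.continuousAt_rpow_const x (1 - v)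
        (Or.inl (by have : (1:ℝ) ≤ x := hx; positivity))).continuousWithinAt
    · intro x hx
      exact (Real.continuousAt_rpow_const x v
        (Or.inl (by have : (1:ℝ) ≤ x := hx; positivity))).continuousWithinAt
  have hmono : MonotoneOn f (Set.Ici (1:ℝ)) := by
    apply monotoneOn_of_deriv_nonneg (convex_Ici 1) hcont
    · intro x hx
      rw [interior_Ici] at hx
      exact (hderiv x hx).differentiableAt.differentiableWithinAt
    · intro x hx
      rw [interior_Ici] at hx
      rw [(hderiv x hx).deriv]
      exact stmt12_key x v (lt_trans one_pos hx) hv0 hv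
  have h1 : f 1 ≤ f t := hmono (Set.self_mem_Ici) ht ht
  have hf1 : f 1 = 0 := by simp [hf, Real.one_rpow]
  rw [hf1] at h1
  exact h1
end

section
/- For $a, b > 0$ with $a \ne b$ and $v \in [0,1]$ with $v \ne 1/2$, one has $\sqrt{ab} \le \frac{a^{1-v}b^v - a^v b^{1-v}}{\log(a^{1-v}b^v) - \log(a^v b^{1-v})} \le \frac{a-b}{\log a - \log b}$. -/
open Real

/-- sinh(c·u) ≤ c·sinh u for 0 ≤ c ≤ 1, 0 ≤ u (convexity of sinh on [0,∞)). -/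
lemma sinh_mul_le {c u : ℝ} (hc0 : 0 ≤ c) (hc1 : c ≤ 1) (hu : 0 ≤ u) :
    Real.sinh (c * u) ≤ c * Real.sinh u := by
  have hmono : MonotoneOn (fun x => c * Real.sinh x - Real.sinh (c * x)) (Set.Ici 0) := by
    apply monotoneOn_of_deriv_nonneg (convex_Ici 0)
    · fun_prop
    · intro x hx
      apply DifferentiableAt.differentiableWithinAt
      fun_prop
    · intro x hx
      have hd : deriv (fun x => c * Real.sinh x - Real.sinh (c * x)) x
          = c * Real.cosh x - c * Real.cosh (c * x) := by
        have h1 : HasDerivAt (fun x : ℝ => c * Real.sinh x) (c * Real.cosh x) x :=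
          (Real.hasDerivAt_sinh x).const_mul c
        have h2 : HasDerivAt (fun x : ℝ => Real.sinh (c * x)) (Real.cosh (c * x) * c) x := by
          have := (Real.hasDerivAt_sinh (c * x)).comp x ((hasDerivAt_id x).const_mul c)
          simpa [mul_comm, Function.comp_def] using this
        have := (h1.sub h2).deriv
        exact this.trans (by ring)
      rw [hd]
      have hx0 : 0 ≤ x := by
        simpa using interior_subset (s := Set.Ici (0:ℝ)) hx
      have hcosh : Real.cosh (c * x) ≤ Real.cosh x := by
        rw [Real.cosh_le_cosh]
        rw [abs_of_nonneg (mul_nonneg hc0 hx0), abs_of_nonneg hx0]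
        nlinarith
      nlinarith
  have h0 : (fun x => c * Real.sinh x - Real.sinh (c * x)) 0 = 0 := by simp
  have h2 := hmono (Set.self_mem_Ici) (Set.mem_Ici.2 hu) hu
  rw [h0] at h2
  simpa using h2

lemma sinh_div_ge_one {u : ℝ} (hu : u ≠ 0) : 1 ≤ Real.sinh u / u := by
  rcases hu.lt_or_gt with h | h
  · have : Real.sinh u < u := Real.sinh_lt_self_iff.2 h
    rw [le_div_iff_of_neg h]
    linarith
  · have : u < Real.sinh u := Real.self_lt_sinh_iff.2 h
    rw [le_div_iff₀ h]; linarith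

lemma sinh_div_mono {u w : ℝ} (hu : 0 < u) (huw : u ≤ w) :
    Real.sinh u / u ≤ Real.sinh w / w := by
  have hw : 0 < w := lt_of_lt_of_le hu huw
  have hc0 : 0 ≤ u / w := by positivity
  have hc1 : u / w ≤ 1 := (div_le_one hw).2 huw
  have := sinh_mul_le hc0 hc1 hw.le
  rw [div_mul_cancel₀ _ hw.ne'] at this
  rw [div_le_div_iff₀ hu hw]
  calc Real.sinh u * w ≤ (u / w * Real.sinh w) * w := by nlinarith
    _ = Real.sinh w * u := by field_simp

lemma sinh_div_abs (u : ℝ) : Real.sinh u / u = Real.sinh |u| / |u| := by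
  rcases le_or_gt 0 u with h | h
  · rw [abs_of_nonneg h]
  · rw [abs_of_neg h, Real.sinh_neg, neg_div_neg_eq]

theorem stmt13 (a b v : ℝ) (ha : 0 < a) (hb : 0 < b) (hab : a ≠ b)
    (hv0 : 0 ≤ v) (hv1 : v ≤ 1) (hv : v ≠ 1 / 2) :
    Real.sqrt (a * b) ≤
      (a ^ (1 - v) * b ^ v - a ^ v * b ^ (1 - v)) /
        (Real.log (a ^ (1 - v) * b ^ v) - Real.log (a ^ v * b ^ (1 - v))) ∧
    (a ^ (1 - v) * b ^ v - a ^ v * b ^ (1 - v)) /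
        (Real.log (a ^ (1 - v) * b ^ v) - Real.log (a ^ v * b ^ (1 - v))) ≤
      (a - b) / (Real.log a - Real.log b) := by
  set la := Real.log a with hla
  set lb := Real.log b with hlb
  set m := (la + lb) / 2 with hm
  set t := la - lb with ht
  set s := (1 - 2 * v) * t with hs
  have htne : t ≠ 0 := by
    intro h
    apply hab
    have : la = lb := by linarith [sub_eq_zero.mp h]
    calc a = Real.exp la := (Real.exp_log ha).symm
      _ = Real.exp lb := by rw [this]
      _ = b := Real.exp_log hb
  have hcne : 1 - 2 * v ≠ 0 := by
    intro h; apply hv; linarith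
  have hsne : s ≠ 0 := mul_ne_zero hcne htne
  -- key rewrites
  have hx : a ^ (1 - v) * b ^ v = Real.exp (m + s / 2) := by
    rw [Real.rpow_def_of_pos ha, Real.rpow_def_of_pos hb, ← Real.exp_add]
    congr 1
    rw [hm, hs, ht]; ring
  have hy : a ^ v * b ^ (1 - v) = Real.exp (m - s / 2) := by
    rw [Real.rpow_def_of_pos ha, Real.rpow_def_of_pos hb, ← Real.exp_add]
    congr 1
    rw [hm, hs, ht]; ring
  have hsqrt : Real.sqrt (a * b) = Real.exp m := by
    have : a * b = Real.exp m ^ 2 := by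
      rw [← Real.exp_nat_mul]
      rw [show ((2:ℕ):ℝ) * m = la + lb by rw [hm]; push_cast; ring]
      rw [Real.exp_add, Real.exp_log ha, Real.exp_log hb]
    rw [this, Real.sqrt_sq (Real.exp_pos m).le]
  have hlog : Real.log (a ^ (1 - v) * b ^ v) - Real.log (a ^ v * b ^ (1 - v)) = s := by
    rw [hx, hy, Real.log_exp, Real.log_exp]; ring
  have hab' : a - b = Real.exp (m + t / 2) - Real.exp (m - t / 2) := by
    have h1 : a = Real.exp (m + t / 2) := by
      rw [show m + t / 2 = la by rw [hm, ht]; ring, Real.exp_log ha]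
    have h2 : b = Real.exp (m - t / 2) := by
      rw [show m - t / 2 = lb by rw [hm, ht]; ring, Real.exp_log hb]
    rw [h1, h2]
  -- express middle quantity using sinh
  have key : ∀ u : ℝ, u ≠ 0 →
      (Real.exp (m + u / 2) - Real.exp (m - u / 2)) / u
        = Real.exp m * (Real.sinh (u / 2) / (u / 2)) := by
    intro u hu
    have h3 : Real.exp (m + u / 2) - Real.exp (m - u / 2)
        = Real.exp m * (2 * Real.sinh (u / 2)) := by
      rw [Real.sinh_eq, show m - u / 2 = m + -(u / 2) by ring, Real.exp_add, Real.exp_add,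
        Real.exp_neg]
      field_simp
    rw [h3]
    field_simp
  have hmid : (a ^ (1 - v) * b ^ v - a ^ v * b ^ (1 - v)) /
        (Real.log (a ^ (1 - v) * b ^ v) - Real.log (a ^ v * b ^ (1 - v)))
      = Real.exp m * (Real.sinh (s / 2) / (s / 2)) := by
    rw [hlog, hx, hy, key s hsne]
  have hrhs : (a - b) / (Real.log a - Real.log b)
      = Real.exp m * (Real.sinh (t / 2) / (t / 2)) := by
    rw [hab', ← hla, ← hlb, ← ht, key t htne]
  constructor
  · rw [hmid, hsqrt]
    have h1 : 1 ≤ Real.sinh (s / 2) / (s / 2) :=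
      sinh_div_ge_one (by positivity)
    nlinarith [Real.exp_pos m]
  · rw [hmid, hrhs]
    have hmono : Real.sinh (s / 2) / (s / 2) ≤ Real.sinh (t / 2) / (t / 2) := by
      rw [sinh_div_abs (s / 2), sinh_div_abs (t / 2)]
      apply sinh_div_mono
      · positivity
      · rw [abs_div, abs_div]
        apply div_le_div_of_nonneg_right _ (by norm_num)
        rw [hs, abs_mul]
        have : |1 - 2 * v| ≤ 1 := by
          rw [abs_le]; constructor <;> linarith
        nlinarith [abs_nonneg t, abs_nonneg (1 - 2*v)]
    have := Real.exp_pos m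
    nlinarith
end

section
/- For $t > 0$, $t \ne 1$, and $v \in (0,1)$, one has $L_v(t) L_{1-v}(t) \le \left(\frac{t-1}{\log t}\right)^2$, where $L_v(t) = \frac{1}{\log t}\left(\frac{1-v}{v}(t - t^{1-v}) + \frac{v}{1-v}(t^{1-v} - 1)\right)$. -/
open Real Set

lemma convexOn_sinh' : ConvexOn ℝ (Ici (0:ℝ)) Real.sinh := by
  apply convexOn_of_deriv2_nonneg (convex_Ici 0) Real.continuous_sinh.continuousOn
    Real.differentiable_sinh.differentiableOn
  · rw [Real.deriv_sinh]; exact Real.differentiable_cosh.differentiableOn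
  · intro x hx
    rw [interior_Ici, mem_Ioi] at hx
    simp only [Function.iterate_succ, Function.iterate_zero, Function.comp, id_eq]
    rw [Real.deriv_sinh, Real.deriv_cosh]
    exact Real.sinh_nonneg_iff.2 hx.le

lemma sinh_mono_div (p q u : ℝ) (hp : 0 < p) (hpq : p ≤ q) (hu : 0 ≤ u) :
    q * Real.sinh (p * u) ≤ p * Real.sinh (q * u) := by
  have hq : 0 < q := lt_of_lt_of_le hp hpq
  have ha : (0:ℝ) ≤ 1 - p/q := by rw [sub_nonneg]; exact div_le_one_of_le₀ hpq hq.le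
  have hb : (0:ℝ) ≤ p/q := by positivity
  have hab : (1 - p/q) + p/q = 1 := by ring
  have h := convexOn_sinh'.2 (self_mem_Ici) (mem_Ici.2 (mul_nonneg hq.le hu)) ha hb hab
  simp only [smul_eq_mul, mul_zero, zero_add, Real.sinh_zero] at h
  rw [div_mul_eq_mul_div, mul_comm q u, mul_div_assoc, mul_div_cancel_right₀ _ hq.ne',
    mul_comm u q] at h
  calc q * Real.sinh (p*u) ≤ q * (p/q * Real.sinh (q*u)) := by
        apply mul_le_mul_of_nonneg_left _ hq.le
        linarith
    _ = p * Real.sinh (q*u) := by field_simp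

lemma sinh_sq_mono (p q s : ℝ) (hp : 0 < p) (hpq : p ≤ q) :
    q^2 * Real.sinh (p * s)^2 ≤ p^2 * Real.sinh (q * s)^2 := by
  have hq : 0 < q := lt_of_lt_of_le hp hpq
  have h := sinh_mono_div p q |s| hp hpq (abs_nonneg s)
  have h1 : q * |Real.sinh (p * s)| = q * Real.sinh (p * |s|) := by
    rw [Real.abs_sinh, abs_mul, abs_of_pos hp]
  have h2 : p * |Real.sinh (q * s)| = p * Real.sinh (q * |s|) := by
    rw [Real.abs_sinh, abs_mul, abs_of_pos hq]
  have h3 : q * |Real.sinh (p * s)| ≤ p * |Real.sinh (q * s)| := by rw [h1, h2]; exact h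
  have h4 : 0 ≤ q * |Real.sinh (p * s)| := by positivity
  calc q^2 * Real.sinh (p * s)^2 = (q * |Real.sinh (p * s)|)^2 := by
        rw [mul_pow, sq_abs]
    _ ≤ (p * |Real.sinh (q * s)|)^2 := by apply pow_le_pow_left₀ h4 h3
    _ = p^2 * Real.sinh (q * s)^2 := by rw [mul_pow, sq_abs]

lemma keyS (t p q : ℝ) (ht : 0 < t) (hp : 0 < p) (hpq : p ≤ q) :
    q^2 * t ^ q * (t ^ p - 1)^2 ≤ p^2 * t ^ p * (t ^ q - 1)^2 := by
  set l := Real.log t with hl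
  have hrp : ∀ c : ℝ, t ^ c = Real.exp (c * l) := fun c => by
    rw [Real.rpow_def_of_pos ht, mul_comm]
  have hsq : ∀ a : ℝ, Real.exp a ^ 2 = Real.exp (a + a) := fun a => by
    rw [Real.exp_add]; ring
  have hfac : ∀ c : ℝ, Real.exp (c * l) - 1
      = Real.exp (c * l / 2) * (2 * Real.sinh (c * (l/2))) := by
    intro c
    rw [Real.sinh_eq]
    have h0 : Real.exp (c * l / 2) * (2 * ((Real.exp (c * (l/2)) - Real.exp (-(c * (l/2)))) / 2))
        = Real.exp (c * l / 2) * Real.exp (c * (l/2))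
          - Real.exp (c * l / 2) * Real.exp (-(c * (l/2))) := by ring
    rw [h0, ← Real.exp_add, ← Real.exp_add,
      show c * l / 2 + c * (l/2) = c * l by ring,
      show c * l / 2 + -(c * (l/2)) = 0 by ring, Real.exp_zero]
  have key := sinh_sq_mono p q (l/2) hp hpq
  have hE : (0:ℝ) < Real.exp (q * l) * Real.exp (p * l) := by positivity
  calc q^2 * t ^ q * (t ^ p - 1)^2
      = Real.exp (q * l) * Real.exp (p * l) * (q^2 * Real.sinh (p * (l/2))^2) * 4 := by
        rw [hrp q, hrp p, hfac p, mul_pow, hsq, show p * l / 2 + p * l / 2 = p * l by ring]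
        ring
    _ ≤ Real.exp (q * l) * Real.exp (p * l) * (p^2 * Real.sinh (q * (l/2))^2) * 4 := by
        gcongr
    _ = p^2 * t ^ p * (t ^ q - 1)^2 := by
        rw [hrp p, hrp q, hfac q, mul_pow, hsq, show q * l / 2 + q * l / 2 = q * l by ring]
        ring

lemma auxAB (t v : ℝ) (ht : 0 < t) (hv0 : 0 < v) (hv1 : v < 1) (hv2 : v ≤ 1/2) :
    ((1 - v) / v * (t - t ^ (1 - v)) + v / (1 - v) * (t ^ (1 - v) - 1)) *
      (v / (1 - v) * (t - t ^ v) + (1 - v) / v * (t ^ v - 1)) ≤ (t - 1)^2 := by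
  have hv1' : 0 < 1 - v := by linarith
  set x := t ^ v with hxdef
  set y := t ^ (1 - v) with hydef
  have hx : 0 < x := Real.rpow_pos_of_pos ht v
  have hy : 0 < y := Real.rpow_pos_of_pos ht (1 - v)
  have hxy : x * y = t := by
    rw [hxdef, hydef, ← Real.rpow_add ht, show v + (1 - v) = 1 by ring, Real.rpow_one]
  have key := keyS t v (1 - v) ht hv0 (by linarith)
  rw [← hxdef, ← hydef] at key
  -- key : (1-v)^2 * y * (x-1)^2 ≤ v^2 * x * (y-1)^2
  have hA : (1 - v) / v * (t - y) + v / (1 - v) * (y - 1)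
      = ((1 - v)^2 * (t - y) + v^2 * (y - 1)) / (v * (1 - v)) := by
    field_simp
  have hB : v / (1 - v) * (t - x) + (1 - v) / v * (x - 1)
      = (v^2 * (t - x) + (1 - v)^2 * (x - 1)) / (v * (1 - v)) := by
    field_simp
  rw [hA, hB, div_mul_div_comm, div_le_iff₀ (by positivity)]
  have h12 : 0 ≤ 1 - 2 * v := by linarith
  have hK : 0 ≤ v^2 * x * (y-1)^2 - (1-v)^2 * y * (x-1)^2 := by linarith
  have hid : (x*y - 1)^2 * (v * (1 - v) * (v * (1 - v)))
      - ((1-v)^2 * (x*y - y) + v^2 * (y-1)) * (v^2 * (x*y - x) + (1-v)^2 * (x-1))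
      = (1 - 2*v) * (v^2 * x * (y-1)^2 - (1-v)^2 * y * (x-1)^2) := by ring
  rw [← hxy]
  nlinarith [mul_nonneg h12 hK, hid]

theorem stmt14 (t v : ℝ) (ht : 0 < t) (ht1 : t ≠ 1) (hv0 : 0 < v) (hv1 : v < 1) :
    ((1 / Real.log t) * ((1 - v) / v * (t - t ^ (1 - v)) + v / (1 - v) * (t ^ (1 - v) - 1))) *
      ((1 / Real.log t) * (v / (1 - v) * (t - t ^ v) + (1 - v) / v * (t ^ v - 1)))
      ≤ ((t - 1) / Real.log t) ^ 2 := by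
  have hL : Real.log t ≠ 0 := Real.log_ne_zero_of_pos_of_ne_one ht ht1
  have hL2 : (0:ℝ) < (Real.log t)^2 := by positivity
  have hAB : ((1 - v) / v * (t - t ^ (1 - v)) + v / (1 - v) * (t ^ (1 - v) - 1)) *
      (v / (1 - v) * (t - t ^ v) + (1 - v) / v * (t ^ v - 1)) ≤ (t - 1)^2 := by
    rcases le_total v (1/2) with hv | hv
    · exact auxAB t v ht hv0 hv1 hv
    · have h := auxAB t (1 - v) ht (by linarith) (by linarith) (by linarith)
      rw [show 1 - (1 - v) = v by ring] at h
      linarith [h, mul_comm ((1 - v) / v * (t - t ^ (1 - v)) + v / (1 - v) * (t ^ (1 - v) - 1))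
        (v / (1 - v) * (t - t ^ v) + (1 - v) / v * (t ^ v - 1))]
  calc ((1 / Real.log t) * ((1 - v) / v * (t - t ^ (1 - v)) + v / (1 - v) * (t ^ (1 - v) - 1))) *
      ((1 / Real.log t) * (v / (1 - v) * (t - t ^ v) + (1 - v) / v * (t ^ v - 1)))
      = (((1 - v) / v * (t - t ^ (1 - v)) + v / (1 - v) * (t ^ (1 - v) - 1)) *
        (v / (1 - v) * (t - t ^ v) + (1 - v) / v * (t ^ v - 1))) / (Real.log t)^2 := by
        ring
    _ ≤ (t - 1)^2 / (Real.log t)^2 := by gcongr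
    _ = ((t - 1) / Real.log t) ^ 2 := by rw [div_pow]
end

section
/- For $a, b > 0$ with $a \ne b$ and $v \in (0,1)$, one has $\sqrt{ab} \le \sqrt{L_v(a,b) L_{1-v}(a,b)} \le \frac{a-b}{\log a - \log b}$, where $L_v(a,b) = \frac{1}{\log a - \log b}\left(\frac{1-v}{v}(a - a^{1-v}b^v) + \frac{v}{1-v}(a^{1-v}b^v - b)\right)$. -/
open Real


lemma L1' : ∀ s : ℝ, 0 ≤ s → exp s - exp (-s) ≤ s * (exp s + exp (-s)) := by
  have hmono : MonotoneOn (fun s : ℝ => s * (exp s + exp (-s)) - (exp s - exp (-s))) (Set.Ici 0) := by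
    apply monotoneOn_of_hasDerivWithinAt_nonneg (convex_Ici 0)
      (f' := fun s => s * (exp s - exp (-s)))
    · fun_prop
    · intro x hx
      have h : HasDerivAt (fun s : ℝ => s * (exp s + exp (-s)) - (exp s - exp (-s)))
          (1 * (exp x + exp (-x)) + x * (exp x + exp (-x) * (-1)) - (exp x - exp (-x) * (-1))) x := by
        apply HasDerivAt.sub
        · exact (hasDerivAt_id' (x := x)).mul ((Real.hasDerivAt_exp x).add
            ((Real.hasDerivAt_exp (-x)).comp x (hasDerivAt_neg x)))
        · exact (Real.hasDerivAt_exp x).sub ((Real.hasDerivAt_exp (-x)).comp x (hasDerivAt_neg x))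
      have h2 : HasDerivAt (fun s : ℝ => s * (exp s + exp (-s)) - (exp s - exp (-s)))
          (x * (exp x - exp (-x))) x := by convert h using 1; ring
      exact h2.hasDerivWithinAt
    · intro x hx
      rw [interior_Ici] at hx
      have hx0 : (0:ℝ) < x := hx
      have : exp (-x) ≤ exp x := exp_le_exp.2 (by linarith)
      nlinarith
  intro s hs
  have := hmono (Set.self_mem_Ici) (Set.mem_Ici.2 hs) hs
  simp at this
  linarith


lemma cosh_mono' {x y : ℝ} (hx : 0 ≤ x) (hxy : x ≤ y) :
    exp x + exp (-x) ≤ exp y + exp (-y) := by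
  have h1 : exp x ≤ exp y := exp_le_exp.2 hxy
  have hX : 1 ≤ exp x := one_le_exp hx
  rw [exp_neg, exp_neg, ← sub_nonneg]
  have hxp := exp_pos x; have hyp := exp_pos y
  have : exp y + (exp y)⁻¹ - (exp x + (exp x)⁻¹)
      = (exp y - exp x) * (exp x * exp y - 1) / (exp x * exp y) := by
    field_simp; ring
  rw [this]
  apply div_nonneg _ (by positivity)
  have hY : 1 ≤ exp y := le_trans hX h1
  nlinarith [mul_nonneg (sub_nonneg.2 h1) (by nlinarith : (0:ℝ) ≤ exp x * exp y - 1)]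
lemma L2' {x y : ℝ} (hx : 0 ≤ x) (hxy : x ≤ y) :
    y * (exp x - exp (-x)) ≤ x * (exp y - exp (-y)) := by
  have hmono : MonotoneOn (fun y : ℝ => x * (exp y - exp (-y)) - y * (exp x - exp (-x)))
      (Set.Ici x) := by
    apply monotoneOn_of_hasDerivWithinAt_nonneg (convex_Ici x)
      (f' := fun z => x * (exp z + exp (-z)) - (exp x - exp (-x)))
    · fun_prop
    · intro z hz
      have h : HasDerivAt (fun y : ℝ => x * (exp y - exp (-y)) - y * (exp x - exp (-x)))
          (x * (exp z + exp (-z)) - (exp x - exp (-x))) z := by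
        have h1 : HasDerivAt (fun y : ℝ => exp (-y)) (exp (-z) * (-1)) z :=
          (hasDerivAt_neg z).exp
        have h2 := ((Real.hasDerivAt_exp z).sub h1).const_mul x
        have h3 := (hasDerivAt_id' (x := z)).mul_const (exp x - exp (-x))
        have h4 := h2.sub h3
        exact h4.congr_deriv (by ring)
      exact h.hasDerivWithinAt
    · intro z hz
      rw [interior_Ici] at hz
      have hc := cosh_mono' hx hz.le
      have h1 := L1' x hx
      nlinarith [exp_pos z, exp_pos (-z)]
  have h := hmono (Set.self_mem_Ici) (Set.mem_Ici.2 hxy) hxy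
  dsimp only at h
  nlinarith [h]


lemma exp1 {v : ℝ} (hv0 : 0 < v) (hv1 : v < 1) :
    ∀ t : ℝ, 0 ≤ t →
      t ≤ (1-v)/v * (exp (v*t) - 1) + v/(1-v) * (1 - exp (-((1-v)*t))) := by
  have hmono : MonotoneOn
      (fun t : ℝ => (1-v)/v * (exp (v*t) - 1) + v/(1-v) * (1 - exp (-((1-v)*t))) - t)
      (Set.Ici 0) := by
    apply monotoneOn_of_hasDerivWithinAt_nonneg (convex_Ici 0)
      (f' := fun t => (1-v) * exp (v*t) + v * exp (-((1-v)*t)) - 1)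
    · fun_prop
    · intro z hz
      have e1 : HasDerivAt (fun t : ℝ => exp (v*t)) (exp (v*z) * (v*1)) z :=
        ((hasDerivAt_id' (x := z)).const_mul v).exp
      have e2 : HasDerivAt (fun t : ℝ => exp (-((1-v)*t))) (exp (-((1-v)*z)) * (-((1-v)*1))) z :=
        (((hasDerivAt_id' (x := z)).const_mul (1-v)).neg).exp
      have h := (((e1.sub_const 1).const_mul ((1-v)/v)).add
        (((hasDerivAt_const z (1:ℝ)).sub e2).const_mul (v/(1-v)))).sub (hasDerivAt_id' (x := z))
      have h2 : HasDerivAt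
          (fun t : ℝ => (1-v)/v * (exp (v*t) - 1) + v/(1-v) * (1 - exp (-((1-v)*t))) - t)
          ((1-v) * exp (v*z) + v * exp (-((1-v)*z)) - 1) z := by
        refine h.congr_deriv ?_
        have h1v : (1:ℝ) - v ≠ 0 := by linarith
        have hvne : v ≠ 0 := ne_of_gt hv0
        field_simp
        ring
      exact h2.hasDerivWithinAt
    · intro z hz
      rw [interior_Ici] at hz
      have h1 := add_one_le_exp (v*z)
      have h2 := add_one_le_exp (-((1-v)*z))
      nlinarith [(Set.mem_Ioi.1 hz).le]
  intro t ht
  have h := hmono (Set.self_mem_Ici) (Set.mem_Ici.2 ht) ht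
  dsimp only at h
  simp only [mul_zero, neg_zero, exp_zero] at h
  nlinarith [h]


lemma half {b x y : ℝ} (hb : 0 < b) (hx : 0 ≤ x) (hxy : x ≤ y) :
    y^2 * (b*exp y) * (b*exp x - b)^2 ≤ x^2 * (b*exp x) * (b*exp y - b)^2 := by
  have key : y^2 * exp y * (exp x - 1)^2 ≤ x^2 * exp x * (exp y - 1)^2 := by
    have hy : 0 ≤ y := le_trans hx hxy
    have hL := L2' (x := x/2) (y := y/2) (by linarith) (by linarith)
    have hA0 : 0 ≤ (y/2)*(exp (x/2) - exp (-(x/2))) :=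
      mul_nonneg (by linarith) (sub_nonneg.2 (exp_le_exp.2 (by linarith)))
    have hsq := pow_le_pow_left₀ hA0 hL 2
    have q1 : exp (x/2) * exp (x/2) = exp x := by rw [← exp_add]; congr 1; ring
    have q2 : exp (x/2) * exp (-(x/2)) = 1 := by rw [← exp_add]; simp
    have q3 : exp (y/2) * exp (y/2) = exp y := by rw [← exp_add]; congr 1; ring
    have q4 : exp (y/2) * exp (-(y/2)) = 1 := by rw [← exp_add]; simp
    have e1x : (exp (x/2)*exp (x/2) - 1)^2
        = (exp (x/2) - exp (-(x/2)))^2 * (exp (x/2) * exp (x/2)) := by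
      linear_combination (2*exp (x/2)^2 - exp (x/2)*exp (-(x/2)) - 1) * q2
    have e1y : (exp (y/2)*exp (y/2) - 1)^2
        = (exp (y/2) - exp (-(y/2)))^2 * (exp (y/2) * exp (y/2)) := by
      linear_combination (2*exp (y/2)^2 - exp (y/2)*exp (-(y/2)) - 1) * q4
    rw [← q1, ← q3]
    have hsq4 := mul_le_mul_of_nonneg_right hsq
      (by positivity : (0:ℝ) ≤ 4*((exp (x/2)*exp (x/2))*(exp (y/2)*exp (y/2))))
    calc y^2 * (exp (y/2)*exp (y/2)) * (exp (x/2)*exp (x/2) - 1)^2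
        = ((y/2)*(exp (x/2) - exp (-(x/2))))^2
            * (4*((exp (x/2)*exp (x/2))*(exp (y/2)*exp (y/2)))) := by
          linear_combination (y^2 * (exp (y/2)*exp (y/2))) * e1x
      _ ≤ ((x/2)*(exp (y/2) - exp (-(y/2))))^2
            * (4*((exp (x/2)*exp (x/2))*(exp (y/2)*exp (y/2)))) := hsq4
      _ = x^2 * (exp (x/2)*exp (x/2)) * (exp (y/2)*exp (y/2) - 1)^2 := by
          linear_combination (-(x^2 * (exp (x/2)*exp (x/2)))) * e1y
  have e1 : y^2 * (b*exp y) * (b*exp x - b)^2 = b^3 * (y^2 * exp y * (exp x - 1)^2) := by ring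
  have e2 : x^2 * (b*exp x) * (b*exp y - b)^2 = b^3 * (x^2 * exp x * (exp y - 1)^2) := by ring
  rw [e1, e2]
  exact mul_le_mul_of_nonneg_left key (by positivity)


lemma master (a b v : ℝ) (ha : 0 < a) (hb : 0 < b) (hba : b < a)
    (hv0 : 0 < v) (hv1 : v < 1) :
    Real.sqrt (a * b) ≤
      Real.sqrt (((1 / (Real.log a - Real.log b)) *
          ((1 - v) / v * (a - a ^ (1 - v) * b ^ v) + v / (1 - v) * (a ^ (1 - v) * b ^ v - b))) *
        ((1 / (Real.log a - Real.log b)) *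
          (v / (1 - v) * (a - a ^ v * b ^ (1 - v)) + (1 - v) / v * (a ^ v * b ^ (1 - v) - b)))) ∧
    Real.sqrt (((1 / (Real.log a - Real.log b)) *
          ((1 - v) / v * (a - a ^ (1 - v) * b ^ v) + v / (1 - v) * (a ^ (1 - v) * b ^ v - b))) *
        ((1 / (Real.log a - Real.log b)) *
          (v / (1 - v) * (a - a ^ v * b ^ (1 - v)) + (1 - v) / v * (a ^ v * b ^ (1 - v) - b))))
      ≤ (a - b) / (Real.log a - Real.log b) := by
  have hvne : v ≠ 0 := ne_of_gt hv0
  have h1v : (0:ℝ) < 1 - v := by linarith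
  have h1vne : (1:ℝ) - v ≠ 0 := ne_of_gt h1v
  set t : ℝ := Real.log a - Real.log b with htdef
  have ht : 0 < t := sub_pos.2 (Real.log_lt_log hb hba)
  have htne : t ≠ 0 := ne_of_gt ht
  set c : ℝ := a ^ (1 - v) * b ^ v with hcdef
  set d : ℝ := a ^ v * b ^ (1 - v) with hddef
  have hcpos : 0 < c := mul_pos (rpow_pos_of_pos ha _) (rpow_pos_of_pos hb _)
  have hdpos : 0 < d := mul_pos (rpow_pos_of_pos ha _) (rpow_pos_of_pos hb _)
  have ha' : a = b * exp t := by
    rw [htdef, exp_sub, exp_log ha, exp_log hb]; field_simp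
  have hc : c = b * exp ((1-v)*t) := by
    rw [hcdef, rpow_def_of_pos ha, rpow_def_of_pos hb, ← exp_add]
    nth_rewrite 2 [← exp_log hb]
    rw [← exp_add]; congr 1; rw [htdef]; ring
  have hd : d = b * exp (v*t) := by
    rw [hddef, rpow_def_of_pos ha, rpow_def_of_pos hb, ← exp_add]
    nth_rewrite 2 [← exp_log hb]
    rw [← exp_add]; congr 1; rw [htdef]; ring
  have eadd : exp ((1-v)*t) * exp (v*t) = exp t := by rw [← exp_add]; congr 1; ring
  have hcd : c * d = a * b := by
    rw [hc, hd, ha']; linear_combination b^2 * eadd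
  -- lower bounds on the two factors
  have k1 : c * exp (v*t) = a := by rw [hc, ha']; linear_combination b * eadd
  have k2 : c * exp (-((1-v)*t)) = b := by
    have e2 : exp ((1-v)*t) * exp (-((1-v)*t)) = 1 := by rw [← exp_add]; simp
    rw [hc]; linear_combination b * e2
  have hAv : c * t ≤ (1 - v) / v * (a - c) + v / (1 - v) * (c - b) := by
    have hx := exp1 hv0 hv1 t ht.le
    have heq : (1-v)/v*(a - c) + v/(1-v)*(c - b)
        = c * ((1-v)/v * (exp (v*t) - 1) + v/(1-v) * (1 - exp (-((1-v)*t)))) := by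
      linear_combination (-(1-v)/v) * k1 + (v/(1-v)) * k2
    rw [heq]
    exact mul_le_mul_of_nonneg_left hx hcpos.le
  have k1' : d * exp ((1-v)*t) = a := by
    rw [hd, ha']; linear_combination b * eadd
  have k2' : d * exp (-(v*t)) = b := by
    have e2 : exp (v*t) * exp (-(v*t)) = 1 := by rw [← exp_add]; simp
    rw [hd]; linear_combination b * e2
  have hBv : d * t ≤ v / (1 - v) * (a - d) + (1 - v) / v * (d - b) := by
    have hx := exp1 (v := 1 - v) h1v (by linarith) t ht.le
    have hr : (1:ℝ) - (1 - v) = v := by ring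
    rw [hr] at hx
    have heq : v/(1-v)*(a - d) + (1-v)/v*(d - b)
        = d * (v/(1-v) * (exp ((1-v)*t) - 1) + (1-v)/v * (1 - exp (-(v*t)))) := by
      linear_combination (-v/(1-v)) * k1' + ((1-v)/v) * k2'
    rw [heq]
    exact mul_le_mul_of_nonneg_left hx hdpos.le
  set Av : ℝ := (1 - v) / v * (a - c) + v / (1 - v) * (c - b) with hAvdef
  set Bv : ℝ := v / (1 - v) * (a - d) + (1 - v) / v * (d - b) with hBvdef
  have hAvpos : 0 < Av := lt_of_lt_of_le (by positivity) hAv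
  have hBvpos : 0 < Bv := lt_of_lt_of_le (by positivity) hBv
  constructor
  · -- lower bound
    apply Real.sqrt_le_sqrt
    have hc1 : c ≤ 1/t * Av := by
      rw [one_div, inv_mul_eq_div, le_div_iff₀ ht]; exact hAv
    have hd1 : d ≤ 1/t * Bv := by
      rw [one_div, inv_mul_eq_div, le_div_iff₀ ht]; exact hBv
    calc a * b = c * d := hcd.symm
      _ ≤ (1/t * Av) * (1/t * Bv) :=
          mul_le_mul hc1 hd1 hdpos.le (le_of_lt (by positivity))
  · -- upper bound
    set A : ℝ := (1-v)^2*(a-c)+v^2*(c-b) with hAdef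
    set B : ℝ := v^2*(a-d)+(1-v)^2*(d-b) with hBdef
    have identity : b*(v^2*(1-v)^2*(a-b)^2 - A*B)
        = (1-2*v)*(v^2*d*(c-b)^2 - (1-v)^2*c*(d-b)^2) := by
      rw [hAdef, hBdef]
      linear_combination (-(1-2*v)^2*b - v^2*(1-2*v)*c + (1-v)^2*(1-2*v)*d) * hcd
    have hge : 0 ≤ (1-2*v)*(v^2*d*(c-b)^2 - (1-v)^2*c*(d-b)^2) := by
      rcases le_total v (1/2) with h | h
      · have key := half (b := b) (x := v*t) (y := (1-v)*t) hb
          (mul_nonneg hv0.le ht.le) (mul_le_mul_of_nonneg_right (by linarith) ht.le)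
        rw [← hc, ← hd] at key
        have hsub : (1-v)^2*c*(d-b)^2 ≤ v^2*d*(c-b)^2 := by
          refine le_of_mul_le_mul_left ?_ (show (0:ℝ) < t^2 by positivity)
          calc t^2*((1-v)^2*c*(d-b)^2) = ((1-v)*t)^2*c*(d-b)^2 := by ring
            _ ≤ (v*t)^2*d*(c-b)^2 := key
            _ = t^2*(v^2*d*(c-b)^2) := by ring
        have h2v : 0 ≤ 1-2*v := by linarith
        exact mul_nonneg h2v (by linarith)
      · have key := half (b := b) (x := (1-v)*t) (y := v*t) hb
          (mul_nonneg h1v.le ht.le) (mul_le_mul_of_nonneg_right (by linarith) ht.le)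
        rw [← hc, ← hd] at key
        have hsub : v^2*d*(c-b)^2 ≤ (1-v)^2*c*(d-b)^2 := by
          refine le_of_mul_le_mul_left ?_ (show (0:ℝ) < t^2 by positivity)
          calc t^2*(v^2*d*(c-b)^2) = (v*t)^2*d*(c-b)^2 := by ring
            _ ≤ ((1-v)*t)^2*c*(d-b)^2 := key
            _ = t^2*((1-v)^2*c*(d-b)^2) := by ring
        have h2v : 1-2*v ≤ 0 := by linarith
        exact mul_nonneg_of_nonpos_of_nonpos h2v (by linarith)
    have hABle : A*B ≤ v^2*(1-v)^2*(a-b)^2 := by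
      rw [← identity] at hge
      have hX := (mul_nonneg_iff_of_pos_left hb).1 hge
      linarith
    have eA : (v*(1-v)) * Av = A := by
      rw [hAvdef, hAdef]; field_simp
    have eB : (v*(1-v)) * Bv = B := by
      rw [hBvdef, hBdef]; field_simp
    have hfin : (1/t*Av)*(1/t*Bv) ≤ ((a-b)/t)^2 := by
      refine le_of_mul_le_mul_left ?_ (show (0:ℝ) < t^2*(v^2*(1-v)^2) by positivity)
      calc t^2*(v^2*(1-v)^2) * ((1/t*Av)*(1/t*Bv))
          = ((v*(1-v))*Av)*((v*(1-v))*Bv) := by field_simp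
        _ = A*B := by rw [eA, eB]
        _ ≤ v^2*(1-v)^2*(a-b)^2 := hABle
        _ = t^2*(v^2*(1-v)^2) * (((a-b)/t)^2) := by field_simp
    calc Real.sqrt ((1/t*Av)*(1/t*Bv)) ≤ Real.sqrt (((a-b)/t)^2) := Real.sqrt_le_sqrt hfin
      _ = (a-b)/t := Real.sqrt_sq (div_nonneg (by linarith) ht.le)


theorem stmt15 (a b v : ℝ) (ha : 0 < a) (hb : 0 < b) (hab : a ≠ b)
    (hv0 : 0 < v) (hv1 : v < 1) :
    Real.sqrt (a * b) ≤
      Real.sqrt (((1 / (Real.log a - Real.log b)) *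
          ((1 - v) / v * (a - a ^ (1 - v) * b ^ v) + v / (1 - v) * (a ^ (1 - v) * b ^ v - b))) *
        ((1 / (Real.log a - Real.log b)) *
          (v / (1 - v) * (a - a ^ v * b ^ (1 - v)) + (1 - v) / v * (a ^ v * b ^ (1 - v) - b)))) ∧
    Real.sqrt (((1 / (Real.log a - Real.log b)) *
          ((1 - v) / v * (a - a ^ (1 - v) * b ^ v) + v / (1 - v) * (a ^ (1 - v) * b ^ v - b))) *
        ((1 / (Real.log a - Real.log b)) *
          (v / (1 - v) * (a - a ^ v * b ^ (1 - v)) + (1 - v) / v * (a ^ v * b ^ (1 - v) - b))))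
      ≤ (a - b) / (Real.log a - Real.log b) := by
  rcases hab.lt_or_gt with h | h
  · -- a < b : apply master with roles swapped
    have H := master b a v hb ha h hv0 hv1
    have hlog : Real.log a ≠ Real.log b :=
      ne_of_lt (Real.log_lt_log ha h)
    have hlog' : Real.log a - Real.log b ≠ 0 := sub_ne_zero.2 hlog
    have hlog'' : Real.log b - Real.log a ≠ 0 := sub_ne_zero.2 (Ne.symm hlog)
    have e0 : a * b = b * a := mul_comm a b
    have eP : ((1 / (Real.log a - Real.log b)) *
          ((1 - v) / v * (a - a ^ (1 - v) * b ^ v) + v / (1 - v) * (a ^ (1 - v) * b ^ v - b))) *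
        ((1 / (Real.log a - Real.log b)) *
          (v / (1 - v) * (a - a ^ v * b ^ (1 - v)) + (1 - v) / v * (a ^ v * b ^ (1 - v) - b)))
        = ((1 / (Real.log b - Real.log a)) *
          ((1 - v) / v * (b - b ^ (1 - v) * a ^ v) + v / (1 - v) * (b ^ (1 - v) * a ^ v - a))) *
        ((1 / (Real.log b - Real.log a)) *
          (v / (1 - v) * (b - b ^ v * a ^ (1 - v)) + (1 - v) / v * (b ^ v * a ^ (1 - v) - a))) := by
      field_simp
      ring
    have eR : (a - b) / (Real.log a - Real.log b) = (b - a) / (Real.log b - Real.log a) := by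
      rw [div_eq_div_iff hlog' hlog'']
      ring
    refine ⟨?_, ?_⟩
    · rw [e0, eP]; exact H.1
    · rw [eP, eR]; exact H.2
  · exact master a b v ha hb h hv0 hv1
end

section
/- Let $a \ge b > 0$ with $a \ne b$ and $v \in [0, 1/2]$. Then $\frac{a-b}{\log a - \log b} \le \frac{1}{2}\left((1-v)a + vb\right) + \frac{1}{2} a^{1-v}b^v$. -/
open Real

lemma key_log_ineq (s : ℝ) (hs : 1 ≤ s) : 2 * (s - 1) ≤ Real.log s * (s + 1) := by
  set g : ℝ → ℝ := fun y => Real.log y * (y + 1) - 2 * (y - 1) with hg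
  have hderiv : ∀ x ∈ Set.Ioi (1:ℝ), HasDerivAt g (Real.log x + 1/x - 1) x := by
    intro x hx
    have hx0 : (0:ℝ) < x := lt_trans one_pos hx
    have h1 : HasDerivAt (fun y => Real.log y * (y + 1))
        (x⁻¹ * (x + 1) + Real.log x * 1) x := by
      exact (Real.hasDerivAt_log hx0.ne').mul ((hasDerivAt_id x).add_const 1)
    have h2 : HasDerivAt (fun y : ℝ => 2 * (y - 1)) 2 x := by
      simpa using ((hasDerivAt_id x).sub_const 1).const_mul (2:ℝ)
    have h3 := h1.sub h2
    refine h3.congr_deriv ?_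
    rw [mul_add, inv_mul_cancel₀ hx0.ne']
    ring
  have hcont : ContinuousOn g (Set.Ici 1) := by
    intro x hx
    have hx0 : (0:ℝ) < x := lt_of_lt_of_le one_pos hx
    exact (((Real.continuousAt_log hx0.ne').mul (by fun_prop)).sub
      (by fun_prop)).continuousWithinAt
  have hmono : MonotoneOn g (Set.Ici 1) := by
    apply monotoneOn_of_deriv_nonneg (convex_Ici 1) hcont
    · intro x hx
      rw [interior_Ici] at hx
      exact (hderiv x hx).differentiableAt.differentiableWithinAt
    · intro x hx
      rw [interior_Ici] at hx
      rw [(hderiv x hx).deriv]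
      have hx0 : (0:ℝ) < x := lt_trans one_pos hx
      have hinv : Real.log (1/x) ≤ 1/x - 1 :=
        Real.log_le_sub_one_of_pos (by positivity)
      rw [one_div, Real.log_inv] at hinv
      rw [one_div]
      linarith
  have h1 : g 1 ≤ g s := hmono Set.self_mem_Ici hs hs
  simp only [hg, Real.log_one] at h1
  linarith

theorem stmt16 (a b v : ℝ) (hb : 0 < b) (hba : b ≤ a) (hab : a ≠ b)
    (hv0 : 0 ≤ v) (hv1 : v ≤ 1 / 2) :
    (a - b) / (Real.log a - Real.log b) ≤
      (1 / 2) * ((1 - v) * a + v * b) + (1 / 2) * (a ^ (1 - v) * b ^ v) := by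
  have ha : 0 < a := lt_of_lt_of_le hb hba
  have hba' : b < a := lt_of_le_of_ne hba (Ne.symm hab)
  have hlog : 0 < Real.log a - Real.log b := sub_pos.mpr (Real.log_lt_log hb hba')
  set p := Real.sqrt a with hp
  set q := Real.sqrt b with hq
  have hp0 : 0 < p := Real.sqrt_pos.mpr ha
  have hq0 : 0 < q := Real.sqrt_pos.mpr hb
  have hpq : q ≤ p := Real.sqrt_le_sqrt hba
  have hpa : p ^ 2 = a := Real.sq_sqrt ha.le
  have hqb : q ^ 2 = b := Real.sq_sqrt hb.le
  have hlogp : Real.log a = 2 * Real.log p := by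
    rw [← hpa, Real.log_pow]; push_cast; ring
  have hlogq : Real.log b = 2 * Real.log q := by
    rw [← hqb, Real.log_pow]; push_cast; ring
  have hkey : 2 * (p - q) ≤ (Real.log p - Real.log q) * (p + q) := by
    have hs : 1 ≤ p / q := (one_le_div hq0).mpr hpq
    have h := key_log_ineq (p / q) hs
    rw [Real.log_div hp0.ne' hq0.ne'] at h
    have h2 := mul_le_mul_of_nonneg_right h hq0.le
    calc 2 * (p - q) = (2 * (p / q - 1)) * q := by field_simp
      _ ≤ ((Real.log p - Real.log q) * (p / q + 1)) * q := h2
      _ = (Real.log p - Real.log q) * (p + q) := by field_simp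
  have hA : (a - b) / (Real.log a - Real.log b) ≤ (a + b) / 4 + p * q / 2 := by
    rw [div_le_iff₀ hlog]
    have hppq : 0 < p + q := by linarith
    have hmul := mul_le_mul_of_nonneg_right hkey hppq.le
    have hab' : a - b = (p - q) * (p + q) := by nlinarith
    rw [hab', hlogp, hlogq]
    nlinarith
  have hB : (a + b) / 2 ≤ (1 - v) * a + v * b := by
    nlinarith [mul_nonneg (by linarith : (0:ℝ) ≤ 1/2 - v)
      (by linarith : (0:ℝ) ≤ a - b)]
  have hC : p * q ≤ a ^ (1 - v) * b ^ v := by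
    have e1 : p = a ^ ((1:ℝ)/2) := Real.sqrt_eq_rpow a
    have e2 : q = b ^ ((1:ℝ)/2) := Real.sqrt_eq_rpow b
    have h1 : b ^ ((1:ℝ)/2 - v) ≤ a ^ ((1:ℝ)/2 - v) :=
      Real.rpow_le_rpow hb.le hba (by linarith)
    have ea : a ^ (1 - v) = a ^ ((1:ℝ)/2) * a ^ ((1:ℝ)/2 - v) := by
      rw [← Real.rpow_add ha]; ring_nf
    have eb : b ^ ((1:ℝ)/2) = b ^ ((1:ℝ)/2 - v) * b ^ v := by
      rw [← Real.rpow_add hb]; ring_nf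
    rw [e1, e2, ea, eb]
    have hbv : (0:ℝ) ≤ b ^ v := (Real.rpow_pos_of_pos hb v).le
    have ha2 : (0:ℝ) ≤ a ^ ((1:ℝ)/2) := (Real.rpow_pos_of_pos ha _).le
    have hfin := mul_le_mul_of_nonneg_right (mul_le_mul_of_nonneg_left h1 ha2) hbv
    nlinarith [hfin]
  linarith
end

section
/- For $t \ge 1$ and $v \in [0,1]$, one has $1 - v t^{v-1} - (1-v)t^v + v t^v \log t \ge 0$. -/
theorem stmt17 (t v : ℝ) (ht : 1 ≤ t) (hv0 : 0 ≤ v) (hv1 : v ≤ 1) :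
    0 ≤ 1 - v * t ^ (v - 1) - (1 - v) * t ^ v + v * t ^ v * Real.log t := by
  have ht0 : (0:ℝ) < t := lt_of_lt_of_le one_pos ht
  have htv : (0:ℝ) < t ^ v := Real.rpow_pos_of_pos ht0 v
  -- log (t^v) ≥ 1 - (t^v)⁻¹
  have hlog : 1 - (t ^ v)⁻¹ ≤ Real.log (t ^ v) := by
    have := Real.log_le_sub_one_of_pos (x := (t ^ v)⁻¹) (by positivity)
    rw [Real.log_inv] at this
    linarith
  have hlogrw : Real.log (t ^ v) = v * Real.log t := Real.log_rpow ht0 v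
  have h1 : t ^ v - 1 ≤ t ^ v * (v * Real.log t) := by
    have := mul_le_mul_of_nonneg_left hlog (le_of_lt htv)
    rw [hlogrw] at this
    have hinv : t ^ v * (1 - (t ^ v)⁻¹) = t ^ v - 1 := by
      field_simp
    linarith [hinv ▸ this]
  have h2 : t ^ (v - 1) ≤ t ^ v :=
    Real.rpow_le_rpow_of_exponent_le ht (by linarith)
  nlinarith [mul_le_mul_of_nonneg_left h2 hv0]
end

section
/- For $t \ge 1$ and $v \in [0,1]$, one has $v(1-v)t^{1-v}\log t + v(1-v)\left((1-v)t + v\right)\log t \ge 2\left((1-v)^2(t - t^{1-v}) + v^2(t^{1-v} - 1)\right)$. -/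
lemma key18 (y : ℝ) (hy : 1 ≤ y) : 2 * (y - 1) ≤ (1 + y) * Real.log y := by
  set f : ℝ → ℝ := fun x => (1 + x) * Real.log x - 2 * (x - 1) with hf
  have hderiv : ∀ x ∈ Set.Ioi (1:ℝ), HasDerivAt f (Real.log x + 1/x - 1) x := by
    intro x hx
    have hx0 : x ≠ 0 := by
      have : (1:ℝ) < x := hx
      linarith
    have h1 : HasDerivAt (fun x : ℝ => (1 + x) * Real.log x)
        (1 * Real.log x + (1 + x) * x⁻¹) x := by
      exact (HasDerivAt.const_add 1 (hasDerivAt_id x)).mul (Real.hasDerivAt_log hx0)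
    have h2 : HasDerivAt (fun x : ℝ => 2 * (x - 1)) 2 x := by
      simpa using ((hasDerivAt_id x).sub_const 1).const_mul 2
    have h3 := h1.sub h2
    rw [show Real.log x + 1/x - 1 = 1 * Real.log x + (1 + x) * x⁻¹ - 2 by
      rw [add_mul, mul_inv_cancel₀ hx0, one_div]
      ring]
    exact h3
  have hmono : MonotoneOn f (Set.Ici (1:ℝ)) := by
    apply monotoneOn_of_deriv_nonneg (convex_Ici 1)
    · apply ContinuousOn.sub
      · apply ContinuousOn.mul
        · fun_prop
        · apply Real.continuousOn_log.mono
          intro x hx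
          simp only [Set.mem_Ici] at hx
          simp only [Set.mem_compl_iff, Set.mem_singleton_iff]
          linarith
      · fun_prop
    · intro x hx
      rw [interior_Ici] at hx
      exact ((hderiv x hx).differentiableAt).differentiableWithinAt
    · intro x hx
      rw [interior_Ici] at hx
      rw [(hderiv x hx).deriv]
      have hx1 : (1:ℝ) < x := hx
      have hx0 : 0 < x := by linarith
      have hlog : Real.log x⁻¹ ≤ x⁻¹ - 1 :=
        Real.log_le_sub_one_of_pos (by positivity)
      rw [Real.log_inv] at hlog
      have : 1 - 1/x ≤ Real.log x := by
        rw [one_div]; linarith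
      have : 0 ≤ Real.log x - (1 - 1/x) := by linarith
      linarith
  have h0 : f 1 ≤ f y := hmono (by simp) (by simpa using hy) hy
  simp only [hf, Real.log_one] at h0
  linarith

theorem stmt18 (t v : ℝ) (ht : 1 ≤ t) (hv0 : 0 ≤ v) (hv1 : v ≤ 1) :
    2 * ((1 - v) ^ 2 * (t - t ^ (1 - v)) + v ^ 2 * (t ^ (1 - v) - 1)) ≤
      v * (1 - v) * t ^ (1 - v) * Real.log t + v * (1 - v) * ((1 - v) * t + v) * Real.log t := by
  have ht0 : (0:ℝ) < t := by linarith
  have hs0 : 0 ≤ 1 - v := by linarith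
  have hT0 : (0:ℝ) ≤ t ^ (1 - v) := Real.rpow_nonneg (le_of_lt ht0) _
  have hV0 : (0:ℝ) ≤ t ^ v := Real.rpow_nonneg (le_of_lt ht0) _
  have hmul : t ^ (1 - v) * t ^ v = t := by
    rw [← Real.rpow_add ht0]
    norm_num
  have hy1 : 1 ≤ t ^ v := Real.one_le_rpow ht hv0
  have hy2 : 1 ≤ t ^ (1 - v) := Real.one_le_rpow ht hs0
  have k1 := key18 _ hy1
  have k2 := key18 _ hy2
  rw [Real.log_rpow ht0] at k1 k2
  -- multiply k1 by t^(1-v)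
  have k1' : 2 * (t - t ^ (1 - v)) ≤ (t ^ (1 - v) + t) * (v * Real.log t) := by
    have := mul_le_mul_of_nonneg_left k1 hT0
    nlinarith [hmul]
  -- scale and sum
  nlinarith [mul_le_mul_of_nonneg_left k1' (sq_nonneg (1 - v)),
    mul_le_mul_of_nonneg_left k2 (sq_nonneg v)]
end

section
/- For $t > 0$, $t \ne 1$, and $v \in (0,1)$, one has $\frac{1}{\log t}\left(\frac{1-v}{v}(t - t^{1-v}) + \frac{v}{1-v}(t^{1-v} - 1)\right) \le \frac{1}{2} t^{1-v} + \frac{1}{2}\left((1-v)t + v\right)$. -/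
lemma key1 (x : ℝ) (hx : 0 ≤ x) : 2 * (Real.exp x - 1) ≤ x * (Real.exp x + 1) := by
  have hd : ∀ y : ℝ, HasDerivAt (fun z => z * (Real.exp z + 1) - 2 * (Real.exp z - 1))
      ((y - 1) * Real.exp y + 1) y := by
    intro y
    have h1 := Real.hasDerivAt_exp y
    have := ((hasDerivAt_id y).mul (h1.add_const 1)).sub ((h1.sub_const 1).const_mul 2)
    exact this.congr_deriv (by simp only [id_eq]; ring)
  have mono : MonotoneOn (fun z => z * (Real.exp z + 1) - 2 * (Real.exp z - 1)) (Set.Ici 0) := by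
    apply monotoneOn_of_deriv_nonneg (convex_Ici 0)
    · exact (Continuous.continuousOn (by continuity))
    · intro y _; exact (hd y).differentiableAt.differentiableWithinAt
    · intro y _
      rw [(hd y).deriv]
      have h2 : (-y) + 1 ≤ Real.exp (-y) := Real.add_one_le_exp (-y)
      have h3 : Real.exp (-y) * Real.exp y = 1 := by
        rw [← Real.exp_add]; simp
      nlinarith [Real.exp_pos y]
  have := mono (Set.self_mem_Ici) (Set.mem_Ici.mpr hx) hx
  simp at this
  linarith

lemma key2 (x : ℝ) (hx : x ≤ 0) : x * (Real.exp x + 1) ≤ 2 * (Real.exp x - 1) := by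
  have h := key1 (-x) (by linarith)
  have h3 : Real.exp (-x) * Real.exp x = 1 := by rw [← Real.exp_add]; simp
  nlinarith [Real.exp_pos x, Real.exp_pos (-x)]

lemma trap_s19 (c : ℝ) (hc : c ≠ 0) (a b : ℝ) (hab : a ≤ b) :
    (Real.exp (c * b) - Real.exp (c * a)) / c ≤
      (b - a) * (Real.exp (c * a) + Real.exp (c * b)) / 2 := by
  have hE : Real.exp (c * b) = Real.exp (c * a) * Real.exp (c * (b - a)) := by
    rw [← Real.exp_add]; ring_nf
  rcases lt_or_gt_of_ne hc with hneg | hpos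
  · have hx : c * (b - a) ≤ 0 := mul_nonpos_of_nonpos_of_nonneg hneg.le (by linarith)
    have hk := key2 (c * (b - a)) hx
    rw [div_le_iff_of_neg hneg]
    have := mul_le_mul_of_nonneg_left hk (Real.exp_pos (c * a)).le
    nlinarith [Real.exp_pos (c * a), Real.exp_pos (c * (b - a))]
  · have hx : 0 ≤ c * (b - a) := mul_nonneg hpos.le (by linarith)
    have hk := key1 (c * (b - a)) hx
    rw [div_le_iff₀ hpos]
    have := mul_le_mul_of_nonneg_left hk (Real.exp_pos (c * a)).le
    nlinarith [Real.exp_pos (c * a), Real.exp_pos (c * (b - a))]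

theorem stmt19 (t v : ℝ) (ht : 0 < t) (ht1 : t ≠ 1) (hv0 : 0 < v) (hv1 : v < 1) :
    (1 / Real.log t) * ((1 - v) / v * (t - t ^ (1 - v)) + v / (1 - v) * (t ^ (1 - v) - 1)) ≤
      (1 / 2) * t ^ (1 - v) + (1 / 2) * ((1 - v) * t + v) := by
  set c := Real.log t with hcdef
  have hc : c ≠ 0 := by
    intro h
    have h2 := Real.exp_log ht
    rw [← hcdef, h, Real.exp_zero] at h2
    exact ht1 h2.symm
  have hs : 0 < 1 - v := by linarith
  have hEt : t = Real.exp c := (Real.exp_log ht).symm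
  have hEp : t ^ (1 - v) = Real.exp (c * (1 - v)) := by
    rw [Real.rpow_def_of_pos ht]
  set E := Real.exp (c * (1 - v)) with hEdef
  have h1 := trap_s19 c hc (1 - v) 1 (by linarith)
  have h2 := trap_s19 c hc 0 (1 - v) (by linarith)
  simp only [mul_one, mul_zero, Real.exp_zero] at h1 h2
  have k1 : (1 - v) / v * ((Real.exp c - E) / c) ≤ (1 - v) * (E + Real.exp c) / 2 := by
    have := mul_le_mul_of_nonneg_left h1 (div_pos hs hv0).le
    have heq : (1 - v) / v * ((1 - (1 - v)) * (E + Real.exp c) / 2)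
        = (1 - v) * (E + Real.exp c) / 2 := by
      field_simp; ring
    linarith [this.trans_eq heq]
  have k2 : v / (1 - v) * ((E - 1) / c) ≤ v * (1 + E) / 2 := by
    have := mul_le_mul_of_nonneg_left h2 (div_pos hv0 hs).le
    have heq : v / (1 - v) * (((1 - v) - 0) * (1 + E) / 2) = v * (1 + E) / 2 := by
      field_simp; ring
    linarith [this.trans_eq heq]
  have hLHS : (1 / c) * ((1 - v) / v * (Real.exp c - E) + v / (1 - v) * (E - 1))
      = (1 - v) / v * ((Real.exp c - E) / c) + v / (1 - v) * ((E - 1) / c) := by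
    field_simp
  rw [hEp, hEt, ← hEdef] at *
  rw [hLHS]
  linarith
end
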